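/- arXiv:2508.13110 — 2 statements merged into one kernel-verified Lean document; each statement's English description precedes it below -/
import Mathlib

section
/- Fix a number of trials L ≥ 1 and a callback pattern z ∈ {0,…,L}^2. Let G be a Borel probability measure on [0,1]^2 such that G assigns probability zero to the two points (0,0) and (1,1), f_G(z) > 0, and the quantity Q_− := P_G[p_a = p_b | Z = z]/2 + P_G[p_a < p_b | Z = z] is strictly positive. Then, as L' → ∞, the posterior callback odds ratio θ^odds(G; z, L') converges to (P_G[p_a = p_b | Z = z]/2 + P_G[p_a > p_b | Z = z]) / Q_−. (Proposition 1(c): asymptotics with increasing number of counterfactual applications.) -/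
open MeasureTheory Filter Topology

/-- Binomial probability mass function `b(c; L, p)`. -/
noncomputable def binomPMF (L c : ℕ) (p : ℝ) : ℝ :=
  (L.choose c : ℝ) * p ^ c * (1 - p) ^ (L - c)

/-- Bivariate binomial likelihood `p(z | θ)` with `L` trials per group. -/
noncomputable def biLik (L : ℕ) (z : ℕ × ℕ) (θ : ℝ × ℝ) : ℝ :=
  binomPMF L z.1 θ.1 * binomPMF L z.2 θ.2

/-- Probability that group a gets strictly more callbacks than group b in `L'` fresh trials. -/
noncomputable def gtKernel (L' : ℕ) (θ : ℝ × ℝ) : ℝ :=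
  ∑ cb ∈ Finset.range L', ∑ ca ∈ Finset.Icc (cb + 1) L',
    binomPMF L' ca θ.1 * binomPMF L' cb θ.2

/-- Probability that group a gets strictly fewer callbacks than group b in `L'` fresh trials. -/
noncomputable def ltKernel (L' : ℕ) (θ : ℝ × ℝ) : ℝ :=
  ∑ cb ∈ Finset.Icc 1 L', ∑ ca ∈ Finset.range cb,
    binomPMF L' ca θ.1 * binomPMF L' cb θ.2

/-- Numerator `N(G; z, L')` of the posterior callback odds ratio. -/
noncomputable def Nval (G : Measure (unitInterval × unitInterval)) (L : ℕ) (z : ℕ × ℕ)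
    (L' : ℕ) : ℝ :=
  ∫ θ, gtKernel L' ((θ.1 : ℝ), (θ.2 : ℝ)) * biLik L z ((θ.1 : ℝ), (θ.2 : ℝ)) ∂G

/-- Denominator `D(G; z, L')` of the posterior callback odds ratio. -/
noncomputable def Dval (G : Measure (unitInterval × unitInterval)) (L : ℕ) (z : ℕ × ℕ)
    (L' : ℕ) : ℝ :=
  ∫ θ, ltKernel L' ((θ.1 : ℝ), (θ.2 : ℝ)) * biLik L z ((θ.1 : ℝ), (θ.2 : ℝ)) ∂G

/-- The posterior callback odds ratio `θ^odds(G; z, L') = N / D`. -/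
noncomputable def thetaOdds (G : Measure (unitInterval × unitInterval)) (L : ℕ) (z : ℕ × ℕ)
    (L' : ℕ) : ℝ :=
  Nval G L z L' / Dval G L z L'


/-- The marginal probability mass function `f_G(z)`. -/
noncomputable def margPMF (G : Measure (unitInterval × unitInterval)) (L : ℕ)
    (z : ℕ × ℕ) : ℝ :=
  ∫ θ, biLik L z ((θ.1 : ℝ), (θ.2 : ℝ)) ∂G

/-- The posterior probability `P_G[(p_a, p_b) ∈ A | Z = z]`. -/
noncomputable def postProb (G : Measure (unitInterval × unitInterval)) (L : ℕ)
    (z : ℕ × ℕ) (A : Set (ℝ × ℝ)) : ℝ :=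
  (∫ θ, A.indicator (fun _ => (1 : ℝ)) ((θ.1 : ℝ), (θ.2 : ℝ)) *
      biLik L z ((θ.1 : ℝ), (θ.2 : ℝ)) ∂G) / margPMF G L z

namespace OddsAux

open Finset


open Finset

lemma binomPMF_nonneg {p : ℝ} (h0 : 0 ≤ p) (h1 : p ≤ 1) (n c : ℕ) : 0 ≤ binomPMF n c p := by
  have h2 : (0:ℝ) ≤ 1 - p := by linarith
  unfold binomPMF
  positivity

lemma binomPMF_eq_zero {n c : ℕ} (h : n < c) (p : ℝ) : binomPMF n c p = 0 := by
  unfold binomPMF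
  rw [Nat.choose_eq_zero_of_lt h]
  simp

lemma sum_binomPMF (n : ℕ) (p : ℝ) : ∑ c ∈ range (n+1), binomPMF n c p = 1 := by
  have h := add_pow p (1-p) n
  have h1 : p + (1-p) = 1 := by ring
  rw [h1, one_pow] at h
  exact Eq.trans (Finset.sum_congr rfl fun c _ => by unfold binomPMF; ring) h.symm

lemma sum_binomPMF_le {p : ℝ} (h0 : 0 ≤ p) (h1 : p ≤ 1) (n : ℕ) (s : Finset ℕ) :
    ∑ c ∈ s, binomPMF n c p ≤ 1 := by
  have e : ∑ c ∈ s ∩ range (n+1), binomPMF n c p = ∑ c ∈ s, binomPMF n c p := by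
    refine Finset.sum_subset Finset.inter_subset_left ?_
    intro x hx hx'
    have : n < x := by
      by_contra h
      exact hx' (Finset.mem_inter.2 ⟨hx, Finset.mem_range.2 (by omega)⟩)
    exact binomPMF_eq_zero this p
  rw [← e]
  calc ∑ c ∈ s ∩ range (n+1), binomPMF n c p
      ≤ ∑ c ∈ range (n+1), binomPMF n c p :=
        Finset.sum_le_sum_of_subset_of_nonneg Finset.inter_subset_right
          (fun i _ _ => binomPMF_nonneg h0 h1 n i)
    _ = 1 := sum_binomPMF n p

lemma binomPMF_le_one {p : ℝ} (h0 : 0 ≤ p) (h1 : p ≤ 1) (n c : ℕ) : binomPMF n c p ≤ 1 := by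
  simpa using sum_binomPMF_le h0 h1 n {c}

lemma binom_variance (n : ℕ) (p : ℝ) :
    ∑ c ∈ range (n+1), ((c:ℝ) - n*p)^2 * binomPMF n c p = n * (p*(1-p)) := by
  have h := congrArg (Polynomial.eval p) (bernsteinPolynomial.variance (R := ℝ) n)
  simp only [Polynomial.eval_finset_sum, Polynomial.eval_mul, Polynomial.eval_pow,
    Polynomial.eval_sub, Polynomial.eval_natCast, Polynomial.eval_smul, Polynomial.eval_X,
    Polynomial.eval_one, bernsteinPolynomial, smul_eq_mul, nsmul_eq_mul] at h
  rw [show (n:ℝ) * (p*(1-p)) = (n:ℝ) * p * (1 - p) by ring, ← h]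
  exact Finset.sum_congr rfl fun c _ => by unfold binomPMF; ring

lemma chebyshev {p : ℝ} (h0 : 0 ≤ p) (h1 : p ≤ 1) {t : ℝ} (ht : 0 < t) (n : ℕ) :
    ∑ c ∈ (range (n+1)).filter (fun c : ℕ => t ≤ |(c:ℝ) - n*p|), binomPMF n c p
      ≤ n * (p*(1-p)) / t^2 := by
  have step1 : ∑ c ∈ (range (n+1)).filter (fun c : ℕ => t ≤ |(c:ℝ) - n*p|), binomPMF n c p
      ≤ ∑ c ∈ (range (n+1)).filter (fun c : ℕ => t ≤ |(c:ℝ) - n*p|),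
          ((c:ℝ) - n*p)^2/t^2 * binomPMF n c p := by
    refine Finset.sum_le_sum fun c hc => ?_
    have hmem := (Finset.mem_filter.1 hc).2
    have h2 : t^2 ≤ ((c:ℝ) - n*p)^2 := by
      have ha := abs_nonneg ((c:ℝ) - n*p)
      calc t^2 ≤ |(c:ℝ) - n*p|^2 := by nlinarith
        _ = ((c:ℝ) - n*p)^2 := sq_abs _
    have hb := binomPMF_nonneg h0 h1 n c
    have h3 : (1:ℝ) ≤ ((c:ℝ)-n*p)^2/t^2 := (one_le_div (by positivity)).2 h2
    nlinarith
  refine step1.trans ?_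
  have h2 : (0:ℝ) ≤ 1 - p := by linarith
  calc ∑ c ∈ (range (n+1)).filter (fun c : ℕ => t ≤ |(c:ℝ) - n*p|),
          ((c:ℝ) - n*p)^2/t^2 * binomPMF n c p
      ≤ ∑ c ∈ range (n+1), ((c:ℝ) - n*p)^2/t^2 * binomPMF n c p := by
        refine Finset.sum_le_sum_of_subset_of_nonneg (Finset.filter_subset _ _) fun i _ _ => ?_
        have := binomPMF_nonneg h0 h1 n i
        positivity
    _ = n * (p*(1-p)) / t^2 := by
        rw [← binom_variance n p, Finset.sum_div]
        exact Finset.sum_congr rfl fun c _ => by ring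


open Finset

lemma pascal_zero (p : ℝ) (n : ℕ) : binomPMF (n+1) 0 p = (1-p) * binomPMF n 0 p := by
  unfold binomPMF
  simp [pow_succ]
  ring

lemma pascal_succ (p : ℝ) (n m : ℕ) :
    binomPMF (n+1) (m+1) p = p * binomPMF n m p + (1-p) * binomPMF n (m+1) p := by
  rcases lt_or_ge m n with h | h
  · unfold binomPMF
    rw [Nat.choose_succ_succ]
    have e2 : n - m = (n - (m+1)) + 1 := by omega
    simp only [Nat.succ_eq_add_one]
    push_cast
    rw [e2, pow_succ]
    ring
  · rcases eq_or_lt_of_le h with h' | h'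
    · subst h'
      rw [binomPMF_eq_zero (Nat.lt_succ_self _) p, mul_zero, add_zero]
      unfold binomPMF
      rw [Nat.choose_self, Nat.choose_self, Nat.sub_self, Nat.sub_self, pow_succ]
      push_cast
      ring
    · rw [binomPMF_eq_zero (by omega), binomPMF_eq_zero (by omega),
        binomPMF_eq_zero (by omega)]
      ring

noncomputable def Ak (p : ℝ) (k n : ℕ) : ℝ :=
  ∑ c ∈ range (n+1), binomPMF n (c+k) p * binomPMF n c p

lemma Ak_ext (p : ℝ) (k n N : ℕ) (hN : n+1 ≤ N) :
    Ak p k n = ∑ c ∈ range N, binomPMF n (c+k) p * binomPMF n c p := by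
  refine Finset.sum_subset (Finset.range_subset_range.2 hN) fun x hx hx' => ?_
  exact mul_eq_zero_of_right _ (binomPMF_eq_zero
    (by simp only [Finset.mem_range] at hx'; omega) p)

lemma Ak_nonneg {p : ℝ} (h0 : 0 ≤ p) (h1 : p ≤ 1) (k n : ℕ) : 0 ≤ Ak p k n :=
  Finset.sum_nonneg fun c _ => mul_nonneg (binomPMF_nonneg h0 h1 _ _) (binomPMF_nonneg h0 h1 _ _)

lemma sum_shift_sq {p : ℝ} (h0 : 0 ≤ p) (h1 : p ≤ 1) (n k : ℕ) :
    ∑ c ∈ range (n+1), binomPMF n (c+k) p * binomPMF n (c+k) p ≤ Ak p 0 n := by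
  have e1 : ∑ c ∈ range (n+1), binomPMF n (c+k) p * binomPMF n (c+k) p
      = ∑ j ∈ Finset.Ico k (n+1+k), binomPMF n j p * binomPMF n j p := by
    rw [Finset.sum_Ico_eq_sum_range]
    have : n+1+k-k = n+1 := by omega
    rw [this]
    exact Finset.sum_congr rfl fun i _ => by rw [Nat.add_comm k i]
  rw [e1, Ak_ext p 0 n (n+1+k) (by omega)]
  simp only [Nat.add_zero]
  refine Finset.sum_le_sum_of_subset_of_nonneg ?_ fun i _ _ =>
    mul_nonneg (binomPMF_nonneg h0 h1 _ _) (binomPMF_nonneg h0 h1 _ _)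
  intro x hx
  simp only [Finset.mem_Ico, Finset.mem_range] at *
  omega

lemma Ak_le_A0 {p : ℝ} (h0 : 0 ≤ p) (h1 : p ≤ 1) (k n : ℕ) : Ak p k n ≤ Ak p 0 n := by
  have hnn : 0 ≤ Ak p k n := Ak_nonneg h0 h1 k n
  have hnn0 : 0 ≤ Ak p 0 n := Ak_nonneg h0 h1 0 n
  have cs := Finset.sum_mul_sq_le_sq_mul_sq (range (n+1))
    (fun c => binomPMF n (c+k) p) (fun c => binomPMF n c p)
  have h2 : (∑ c ∈ range (n+1), binomPMF n (c+k) p ^ 2) ≤ Ak p 0 n := by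
    simpa [sq] using sum_shift_sq h0 h1 n k
  have h3 : (∑ c ∈ range (n+1), binomPMF n c p ^ 2) = Ak p 0 n := by
    simp [Ak, sq]
  have h4 : Ak p k n ^ 2 ≤ Ak p 0 n * Ak p 0 n := by
    have h5 : (∑ c ∈ range (n+1), binomPMF n (c+k) p * binomPMF n c p) = Ak p k n := rfl
    rw [h5, h3] at cs
    have h6 : (0:ℝ) ≤ Ak p 0 n := hnn0
    nlinarith
  nlinarith

lemma Ak_zero_succ (p : ℝ) (n : ℕ) :
    Ak p 0 (n+1) = (p^2 + (1-p)^2) * Ak p 0 n + 2*p*(1-p) * Ak p 1 n := by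
  have peel : Ak p 0 (n+1)
      = (∑ i ∈ range (n+1), binomPMF (n+1) (i+1) p * binomPMF (n+1) (i+1) p)
        + binomPMF (n+1) 0 p * binomPMF (n+1) 0 p := by
    have h := Finset.sum_range_succ' (fun c => binomPMF (n+1) (c+0) p * binomPMF (n+1) c p) (n+1)
    simpa [Ak] using h
  rw [peel, pascal_zero]
  have expand : ∀ i, binomPMF (n+1) (i+1) p * binomPMF (n+1) (i+1) p
      = p^2 * (binomPMF n i p * binomPMF n i p)
        + 2*p*(1-p) * (binomPMF n (i+1) p * binomPMF n i p)
        + (1-p)^2 * (binomPMF n (i+1) p * binomPMF n (i+1) p) := by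
    intro i; rw [pascal_succ]; ring
  rw [Finset.sum_congr rfl fun i _ => expand i]
  rw [Finset.sum_add_distrib, Finset.sum_add_distrib, ← Finset.mul_sum, ← Finset.mul_sum,
    ← Finset.mul_sum]
  have h1 : ∑ i ∈ range (n+1), binomPMF n i p * binomPMF n i p = Ak p 0 n := by
    simp [Ak]
  have h2 : ∑ i ∈ range (n+1), binomPMF n (i+1) p * binomPMF n i p = Ak p 1 n := rfl
  have h3 : ∑ i ∈ range (n+1), binomPMF n (i+1) p * binomPMF n (i+1) p
      = Ak p 0 n - binomPMF n 0 p * binomPMF n 0 p := by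
    have hs := Finset.sum_range_succ' (fun c => binomPMF n c p * binomPMF n c p) (n+1)
    have he : ∑ c ∈ range (n+2), binomPMF n c p * binomPMF n c p = Ak p 0 n := by
      rw [Ak_ext p 0 n (n+2) (by omega)]
      exact Finset.sum_congr rfl fun c _ => by rw [Nat.add_zero]
    rw [he] at hs
    linarith
  rw [h1, h2, h3]
  ring

lemma Ak_succ_succ (p : ℝ) (j n : ℕ) :
    Ak p (j+1) (n+1) = (p^2 + (1-p)^2) * Ak p (j+1) n
      + p*(1-p) * (Ak p j n + Ak p (j+2) n) := by
  have peel : Ak p (j+1) (n+1)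
      = (∑ i ∈ range (n+1), binomPMF (n+1) (i+1+(j+1)) p * binomPMF (n+1) (i+1) p)
        + binomPMF (n+1) (0+(j+1)) p * binomPMF (n+1) 0 p :=
    Finset.sum_range_succ' (fun c => binomPMF (n+1) (c+(j+1)) p * binomPMF (n+1) c p) (n+1)
  rw [peel]
  have e0 : (0+(j+1)) = j+1 := by omega
  have expand : ∀ i, binomPMF (n+1) (i+1+(j+1)) p * binomPMF (n+1) (i+1) p
      = p^2 * (binomPMF n (i+(j+1)) p * binomPMF n i p)
        + p*(1-p) * (binomPMF n (i+(j+1)) p * binomPMF n (i+1) p)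
        + p*(1-p) * (binomPMF n (i+(j+2)) p * binomPMF n i p)
        + (1-p)^2 * (binomPMF n (i+(j+2)) p * binomPMF n (i+1) p) := by
    intro i
    have ha : i+1+(j+1) = (i + (j+1)) + 1 := by omega
    have hb : i + (j+1) + 1 = i + (j+2) := by omega
    rw [ha, pascal_succ, pascal_succ, hb]
    ring
  rw [Finset.sum_congr rfl fun i _ => expand i]
  rw [Finset.sum_add_distrib, Finset.sum_add_distrib, Finset.sum_add_distrib,
    ← Finset.mul_sum, ← Finset.mul_sum, ← Finset.mul_sum, ← Finset.mul_sum]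
  have h1 : ∑ i ∈ range (n+1), binomPMF n (i+(j+1)) p * binomPMF n i p = Ak p (j+1) n := rfl
  have h4 : ∑ i ∈ range (n+1), binomPMF n (i+(j+2)) p * binomPMF n i p = Ak p (j+2) n := rfl
  have h2 : ∑ i ∈ range (n+1), binomPMF n (i+(j+1)) p * binomPMF n (i+1) p
      = Ak p j n - binomPMF n j p * binomPMF n 0 p := by
    have hr : ∀ i : ℕ, i+(j+1) = (i+1)+j := fun i => by omega
    rw [Finset.sum_congr rfl fun i _ => by rw [hr i]]
    have hs := Finset.sum_range_succ' (fun c => binomPMF n (c+j) p * binomPMF n c p) (n+1)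
    have he : ∑ c ∈ range (n+2), binomPMF n (c+j) p * binomPMF n c p = Ak p j n :=
      (Ak_ext p j n (n+2) (by omega)).symm
    rw [he] at hs
    simp only [Nat.zero_add] at hs
    linarith
  have h3 : ∑ i ∈ range (n+1), binomPMF n (i+(j+2)) p * binomPMF n (i+1) p
      = Ak p (j+1) n - binomPMF n (j+1) p * binomPMF n 0 p := by
    have hr : ∀ i : ℕ, i+(j+2) = (i+1)+(j+1) := fun i => by omega
    rw [Finset.sum_congr rfl fun i _ => by rw [hr i]]
    have hs := Finset.sum_range_succ' (fun c => binomPMF n (c+(j+1)) p * binomPMF n c p) (n+1)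
    have he : ∑ c ∈ range (n+2), binomPMF n (c+(j+1)) p * binomPMF n c p = Ak p (j+1) n :=
      (Ak_ext p (j+1) n (n+2) (by omega)).symm
    rw [he] at hs
    simp only [Nat.zero_add] at hs
    linarith
  rw [h1, h2, h3, h4, e0, pascal_zero, pascal_succ]
  ring


open Finset

lemma Ak_sum_le_one {p : ℝ} (h0 : 0 ≤ p) (h1 : p ≤ 1) (K n : ℕ) :
    ∑ k ∈ range (K+1), Ak p k n ≤ 1 := by
  have swap : ∑ k ∈ range (K+1), Ak p k n
      = ∑ c ∈ range (n+1), (∑ k ∈ range (K+1), binomPMF n (c+k) p) * binomPMF n c p := by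
    simp only [Ak]
    rw [Finset.sum_comm]
    exact Finset.sum_congr rfl fun c _ => (Finset.sum_mul _ _ _).symm
  rw [swap]
  calc ∑ c ∈ range (n+1), (∑ k ∈ range (K+1), binomPMF n (c+k) p) * binomPMF n c p
      ≤ ∑ c ∈ range (n+1), 1 * binomPMF n c p := by
        refine Finset.sum_le_sum fun c _ => ?_
        refine mul_le_mul_of_nonneg_right ?_ (binomPMF_nonneg h0 h1 _ _)
        have e : ∑ k ∈ range (K+1), binomPMF n (c+k) p
            = ∑ j ∈ Finset.Ico c (c+(K+1)), binomPMF n j p := by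
          rw [Finset.sum_Ico_eq_sum_range]
          have : c + (K+1) - c = K+1 := by omega
          rw [this]
        rw [e]
        exact sum_binomPMF_le h0 h1 n _
    _ = 1 := by
        rw [Finset.sum_congr rfl fun c _ => one_mul _]
        exact sum_binomPMF n p

lemma Ak_tendsto_zero {p : ℝ} (hp0 : 0 < p) (hp1 : p < 1) :
    Tendsto (fun n => Ak p 0 n) atTop (𝓝 0) := by
  have h0 : (0:ℝ) ≤ p := hp0.le
  have h1 : p ≤ 1 := hp1.le
  have hqpos : (0:ℝ) < 1 - p := by linarith
  have hpq : p * (1-p) ≠ 0 := ne_of_gt (by positivity)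
  have hanti : Antitone (fun n => Ak p 0 n) := by
    refine antitone_nat_of_succ_le fun n => ?_
    have h := Ak_zero_succ p n
    have hmul : 2*p*(1-p) * Ak p 1 n ≤ 2*p*(1-p) * Ak p 0 n :=
      mul_le_mul_of_nonneg_left (Ak_le_A0 h0 h1 1 n) (by positivity)
    nlinarith [hmul]
  have hbdd : BddBelow (Set.range fun n => Ak p 0 n) :=
    ⟨0, by rintro x ⟨n, rfl⟩; exact Ak_nonneg h0 h1 0 n⟩
  set l := ⨅ n, Ak p 0 n with hl
  have hA0 : Tendsto (fun n => Ak p 0 n) atTop (𝓝 l) := tendsto_atTop_ciInf hanti hbdd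
  have key : ∀ k, Tendsto (fun n => Ak p k n) atTop (𝓝 l)
      ∧ Tendsto (fun n => Ak p (k+1) n) atTop (𝓝 l) := by
    intro k
    induction k with
    | zero =>
      refine ⟨hA0, ?_⟩
      have he : ∀ n, Ak p 1 n = (Ak p 0 (n+1) - (p^2+(1-p)^2) * Ak p 0 n) / (2*(p*(1-p))) := by
        intro n
        rw [Ak_zero_succ]
        field_simp
        try ring
      have ht : Tendsto (fun n => (Ak p 0 (n+1) - (p^2+(1-p)^2) * Ak p 0 n) / (2*(p*(1-p))))
          atTop (𝓝 ((l - (p^2+(1-p)^2) * l) / (2*(p*(1-p))))) :=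
        ((hA0.comp (tendsto_add_atTop_nat 1)).sub (hA0.const_mul _)).div_const _
      have hv : (l - (p^2+(1-p)^2) * l) / (2*(p*(1-p))) = l := by
        field_simp
        try ring
      rw [hv] at ht
      exact ht.congr fun n => (he n).symm
    | succ k ih =>
      refine ⟨ih.2, ?_⟩
      have he : ∀ n, Ak p (k+2) n
          = (Ak p (k+1) (n+1) - (p^2+(1-p)^2) * Ak p (k+1) n) / (p*(1-p)) - Ak p k n := by
        intro n
        rw [Ak_succ_succ]
        field_simp
        try ring
      have ht : Tendsto (fun n => (Ak p (k+1) (n+1) - (p^2+(1-p)^2) * Ak p (k+1) n) / (p*(1-p))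
            - Ak p k n) atTop (𝓝 ((l - (p^2+(1-p)^2) * l) / (p*(1-p)) - l)) :=
        (((ih.2.comp (tendsto_add_atTop_nat 1)).sub (ih.2.const_mul _)).div_const _).sub ih.1
      have hv : (l - (p^2+(1-p)^2) * l) / (p*(1-p)) - l = l := by
        field_simp
        try ring
      rw [hv] at ht
      exact ht.congr fun n => (he n).symm
  have hl0 : 0 ≤ l := le_ciInf fun n => Ak_nonneg h0 h1 0 n
  have hKl : ∀ K : ℕ, ((K:ℝ)+1) * l ≤ 1 := by
    intro K
    have hsum : Tendsto (fun n => ∑ k ∈ range (K+1), Ak p k n) atTop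
        (𝓝 (∑ _k ∈ range (K+1), l)) :=
      tendsto_finset_sum _ fun k _ => (key k).1
    have hle := le_of_tendsto hsum (Eventually.of_forall fun n => Ak_sum_le_one h0 h1 K n)
    simpa [Finset.sum_const, Finset.card_range, nsmul_eq_mul, add_mul] using hle
  have hlz : l = 0 := by
    by_contra hne
    have hlpos : 0 < l := lt_of_le_of_ne hl0 (Ne.symm hne)
    obtain ⟨K, hK⟩ := exists_nat_gt (1 / l)
    have h2 : (1:ℝ) < K * l := (div_lt_iff₀ hlpos).1 hK
    have h3 := hKl K
    nlinarith
  rw [← hlz]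
  exact hA0


open Finset

noncomputable def eqKer (n : ℕ) (θ : ℝ × ℝ) : ℝ :=
  ∑ c ∈ range (n+1), binomPMF n c θ.1 * binomPMF n c θ.2

lemma gtKernel_eq (n : ℕ) (θ : ℝ × ℝ) :
    gtKernel n θ = ∑ cb ∈ range (n+1), ∑ ca ∈ range (n+1),
      if cb < ca then binomPMF n ca θ.1 * binomPMF n cb θ.2 else 0 := by
  symm
  have inner : ∀ cb, (∑ ca ∈ range (n+1),
        if cb < ca then binomPMF n ca θ.1 * binomPMF n cb θ.2 else 0)
      = ∑ ca ∈ Finset.Icc (cb+1) n, binomPMF n ca θ.1 * binomPMF n cb θ.2 := by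
    intro cb
    rw [← Finset.sum_filter]
    congr 1
    ext a
    simp only [Finset.mem_filter, Finset.mem_Icc, Finset.mem_range]
    omega
  rw [Finset.sum_congr rfl fun cb _ => inner cb, Finset.sum_range_succ,
    Finset.Icc_eq_empty (by omega), Finset.sum_empty, add_zero]
  rfl

lemma ltKernel_eq (n : ℕ) (θ : ℝ × ℝ) :
    ltKernel n θ = ∑ cb ∈ range (n+1), ∑ ca ∈ range (n+1),
      if ca < cb then binomPMF n ca θ.1 * binomPMF n cb θ.2 else 0 := by
  symm
  have inner : ∀ cb ∈ range (n+1), (∑ ca ∈ range (n+1),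
        if ca < cb then binomPMF n ca θ.1 * binomPMF n cb θ.2 else 0)
      = ∑ ca ∈ range cb, binomPMF n ca θ.1 * binomPMF n cb θ.2 := by
    intro cb hcb
    rw [← Finset.sum_filter]
    congr 1
    ext a
    simp only [Finset.mem_filter, Finset.mem_range] at *
    omega
  have ext : ∑ cb ∈ Finset.Icc 1 n, ∑ ca ∈ range cb, binomPMF n ca θ.1 * binomPMF n cb θ.2
      = ∑ cb ∈ range (n+1), ∑ ca ∈ range cb, binomPMF n ca θ.1 * binomPMF n cb θ.2 := by
    refine Finset.sum_subset ?_ ?_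
    · intro x hx
      simp only [Finset.mem_Icc] at hx
      simp only [Finset.mem_range]
      omega
    · intro x hxr hx
      have hx0 : x = 0 := by
        simp only [Finset.mem_Icc] at hx
        simp only [Finset.mem_range] at hxr
        omega
      subst hx0
      simp
  rw [Finset.sum_congr rfl inner, ← ext]
  rfl

lemma eqKer_eq (n : ℕ) (θ : ℝ × ℝ) :
    eqKer n θ = ∑ cb ∈ range (n+1), ∑ ca ∈ range (n+1),
      if ca = cb then binomPMF n ca θ.1 * binomPMF n cb θ.2 else 0 := by
  unfold eqKer
  refine Finset.sum_congr rfl fun cb hcb => ?_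
  rw [Finset.sum_ite_eq' (range (n+1)) cb (fun ca => binomPMF n ca θ.1 * binomPMF n cb θ.2)]
  simp [hcb]

lemma kernel_total (n : ℕ) (θ : ℝ × ℝ) :
    gtKernel n θ + ltKernel n θ + eqKer n θ = 1 := by
  have total : ∑ cb ∈ range (n+1), ∑ ca ∈ range (n+1),
      binomPMF n ca θ.1 * binomPMF n cb θ.2 = 1 := by
    have inner : ∀ cb ∈ range (n+1), ∑ ca ∈ range (n+1),
        binomPMF n ca θ.1 * binomPMF n cb θ.2
        = (∑ ca ∈ range (n+1), binomPMF n ca θ.1) * binomPMF n cb θ.2 :=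
      fun cb _ => (Finset.sum_mul _ _ _).symm
    rw [Finset.sum_congr rfl inner, ← Finset.mul_sum, sum_binomPMF, sum_binomPMF, one_mul]
  rw [gtKernel_eq, ltKernel_eq, eqKer_eq, ← Finset.sum_add_distrib, ← Finset.sum_add_distrib,
    ← total]
  refine Finset.sum_congr rfl fun cb _ => ?_
  rw [← Finset.sum_add_distrib, ← Finset.sum_add_distrib]
  refine Finset.sum_congr rfl fun ca _ => ?_
  split_ifs <;> first | (exfalso; omega) | ring1

lemma ltKernel_swap (n : ℕ) (a b : ℝ) : ltKernel n (a, b) = gtKernel n (b, a) := by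
  rw [ltKernel_eq, gtKernel_eq, Finset.sum_comm]
  refine Finset.sum_congr rfl fun x _ => Finset.sum_congr rfl fun y _ => ?_
  by_cases h : x < y
  · simp only [h, if_true]
    ring
  · simp [h]

section limits
variable {pa pb : ℝ}

lemma gtKernel_nonneg (h0a : 0 ≤ pa) (h1a : pa ≤ 1) (h0b : 0 ≤ pb) (h1b : pb ≤ 1) (n : ℕ) :
    0 ≤ gtKernel n (pa, pb) := by
  unfold gtKernel
  exact Finset.sum_nonneg fun cb _ => Finset.sum_nonneg fun ca _ =>
    mul_nonneg (binomPMF_nonneg h0a h1a _ _) (binomPMF_nonneg h0b h1b _ _)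

lemma ltKernel_nonneg (h0a : 0 ≤ pa) (h1a : pa ≤ 1) (h0b : 0 ≤ pb) (h1b : pb ≤ 1) (n : ℕ) :
    0 ≤ ltKernel n (pa, pb) := by
  unfold ltKernel
  exact Finset.sum_nonneg fun cb _ => Finset.sum_nonneg fun ca _ =>
    mul_nonneg (binomPMF_nonneg h0a h1a _ _) (binomPMF_nonneg h0b h1b _ _)

lemma eqKer_nonneg (h0a : 0 ≤ pa) (h1a : pa ≤ 1) (h0b : 0 ≤ pb) (h1b : pb ≤ 1) (n : ℕ) :
    0 ≤ eqKer n (pa, pb) :=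
  Finset.sum_nonneg fun c _ =>
    mul_nonneg (binomPMF_nonneg h0a h1a _ _) (binomPMF_nonneg h0b h1b _ _)

lemma le_part_bound (h0b : 0 ≤ pb) (hlt : pb < pa) (h1a : pa ≤ 1) {n : ℕ} (hn : 1 ≤ n) :
    ltKernel n (pa, pb) + eqKer n (pa, pb)
      ≤ ((pa*(1-pa) + pb*(1-pb)) / ((pa-pb)/2)^2) / n := by
  classical
  have h0a : 0 ≤ pa := le_trans h0b hlt.le
  have h1b : pb ≤ 1 := le_trans hlt.le h1a
  set δ : ℝ := (pa-pb)/2 with hδ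
  have hδpos : 0 < δ := by rw [hδ]; linarith
  set m : ℝ := (pa+pb)/2 with hm
  have hnpos : (0:ℝ) < n := by exact_mod_cast hn
  have htpos : 0 < δ * n := by positivity
  have merge : ltKernel n (pa,pb) + eqKer n (pa,pb)
      = ∑ cb ∈ range (n+1), ∑ ca ∈ range (n+1),
          if ca ≤ cb then binomPMF n ca pa * binomPMF n cb pb else 0 := by
    rw [ltKernel_eq, eqKer_eq, ← Finset.sum_add_distrib]
    refine Finset.sum_congr rfl fun cb _ => ?_
    rw [← Finset.sum_add_distrib]
    refine Finset.sum_congr rfl fun ca _ => ?_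
    split_ifs <;> first | (exfalso; omega) | ring1
  rw [merge]
  have termwise : ∀ ca cb : ℕ,
      (if ca ≤ cb then binomPMF n ca pa * binomPMF n cb pb else 0)
      ≤ (if (ca:ℝ) ≤ m*n then binomPMF n ca pa * binomPMF n cb pb else 0)
        + (if m*n < (cb:ℝ) then binomPMF n ca pa * binomPMF n cb pb else 0) := by
    intro ca cb
    have hX : 0 ≤ binomPMF n ca pa * binomPMF n cb pb :=
      mul_nonneg (binomPMF_nonneg h0a h1a _ _) (binomPMF_nonneg h0b h1b _ _)
    have iteNN : ∀ (P : Prop) (inst : Decidable P),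
        (0:ℝ) ≤ @ite _ P inst (binomPMF n ca pa * binomPMF n cb pb) 0 := by
      intro P inst
      split_ifs
      · exact hX
      · exact le_rfl
    by_cases h : ca ≤ cb
    · by_cases h2 : (ca:ℝ) ≤ m*n
      · rw [if_pos h, if_pos h2]
        have := iteNN (m*n < (cb:ℝ)) (by infer_instance)
        linarith
      · have h3 : m*n < (cb:ℝ) := by
          push_neg at h2
          calc m*n < (ca:ℝ) := h2
            _ ≤ (cb:ℝ) := by exact_mod_cast h
        rw [if_pos h, if_neg h2, if_pos h3]
        linarith
    · rw [if_neg h]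
      have := iteNN ((ca:ℝ) ≤ m*n) (by infer_instance)
      have := iteNN (m*n < (cb:ℝ)) (by infer_instance)
      linarith
  have hsum : ∑ cb ∈ range (n+1), ∑ ca ∈ range (n+1),
      (if ca ≤ cb then binomPMF n ca pa * binomPMF n cb pb else 0)
      ≤ ∑ cb ∈ range (n+1), ∑ ca ∈ range (n+1),
        ((if (ca:ℝ) ≤ m*n then binomPMF n ca pa * binomPMF n cb pb else 0)
          + (if m*n < (cb:ℝ) then binomPMF n ca pa * binomPMF n cb pb else 0)) :=
    Finset.sum_le_sum fun cb _ => Finset.sum_le_sum fun ca _ => termwise ca cb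
  refine hsum.trans ?_
  have split : ∑ cb ∈ range (n+1), ∑ ca ∈ range (n+1),
      ((if (ca:ℝ) ≤ m*n then binomPMF n ca pa * binomPMF n cb pb else 0)
        + (if m*n < (cb:ℝ) then binomPMF n ca pa * binomPMF n cb pb else 0))
      = (∑ cb ∈ range (n+1), ∑ ca ∈ range (n+1),
          (if (ca:ℝ) ≤ m*n then binomPMF n ca pa * binomPMF n cb pb else 0))
        + (∑ cb ∈ range (n+1), ∑ ca ∈ range (n+1),
          (if m*n < (cb:ℝ) then binomPMF n ca pa * binomPMF n cb pb else 0)) := by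
    rw [← Finset.sum_add_distrib]
    exact Finset.sum_congr rfl fun cb _ => Finset.sum_add_distrib
  rw [split]
  -- first piece
  have hP1 : (∑ cb ∈ range (n+1), ∑ ca ∈ range (n+1),
      (if (ca:ℝ) ≤ m*n then binomPMF n ca pa * binomPMF n cb pb else 0))
      ≤ n * (pa*(1-pa)) / (δ*n)^2 := by
    have inner : ∀ cb ∈ range (n+1), (∑ ca ∈ range (n+1),
        (if (ca:ℝ) ≤ m*n then binomPMF n ca pa * binomPMF n cb pb else 0))
        = (∑ ca ∈ range (n+1), if (ca:ℝ) ≤ m*n then binomPMF n ca pa else 0)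
            * binomPMF n cb pb := by
      intro cb _
      rw [Finset.sum_mul]
      refine Finset.sum_congr rfl fun ca _ => ?_
      split_ifs <;> simp
    rw [Finset.sum_congr rfl inner, ← Finset.mul_sum, sum_binomPMF, mul_one]
    rw [← Finset.sum_filter]
    have hsub : (range (n+1)).filter (fun ca : ℕ => (ca:ℝ) ≤ m*n)
        ⊆ (range (n+1)).filter (fun c : ℕ => δ*n ≤ |(c:ℝ) - n*pa|) := by
      intro c hc
      simp only [Finset.mem_filter] at hc
      simp only [Finset.mem_filter]
      refine ⟨hc.1, ?_⟩
      have hc2 := hc.2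
      calc δ*n ≤ n*pa - c := by rw [hδ]; rw [hm] at hc2; nlinarith
        _ = -((c:ℝ) - n*pa) := by ring
        _ ≤ |(c:ℝ) - n*pa| := neg_le_abs _
    calc ∑ c ∈ (range (n+1)).filter (fun ca : ℕ => (ca:ℝ) ≤ m*n), binomPMF n c pa
        ≤ ∑ c ∈ (range (n+1)).filter (fun c : ℕ => δ*n ≤ |(c:ℝ) - n*pa|), binomPMF n c pa :=
          Finset.sum_le_sum_of_subset_of_nonneg hsub fun i _ _ => binomPMF_nonneg h0a h1a n i
      _ ≤ n * (pa*(1-pa)) / (δ*n)^2 := chebyshev h0a h1a htpos n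
  -- second piece
  have hP2 : (∑ cb ∈ range (n+1), ∑ ca ∈ range (n+1),
      (if m*n < (cb:ℝ) then binomPMF n ca pa * binomPMF n cb pb else 0))
      ≤ n * (pb*(1-pb)) / (δ*n)^2 := by
    have inner : ∀ cb ∈ range (n+1), (∑ ca ∈ range (n+1),
        (if m*n < (cb:ℝ) then binomPMF n ca pa * binomPMF n cb pb else 0))
        = (if m*n < (cb:ℝ) then binomPMF n cb pb else 0) := by
      intro cb _
      by_cases h : m*n < (cb:ℝ)
      · simp only [h, if_true]
        rw [← Finset.sum_mul, sum_binomPMF, one_mul]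
      · simp [h]
    rw [Finset.sum_congr rfl inner, ← Finset.sum_filter]
    have hsub : (range (n+1)).filter (fun cb : ℕ => m*n < (cb:ℝ))
        ⊆ (range (n+1)).filter (fun c : ℕ => δ*n ≤ |(c:ℝ) - n*pb|) := by
      intro c hc
      simp only [Finset.mem_filter] at hc
      simp only [Finset.mem_filter]
      refine ⟨hc.1, ?_⟩
      have hc2 := hc.2
      calc δ*n ≤ (c:ℝ) - n*pb := by rw [hδ]; rw [hm] at hc2; nlinarith
        _ ≤ |(c:ℝ) - n*pb| := le_abs_self _
    calc ∑ c ∈ (range (n+1)).filter (fun cb : ℕ => m*n < (cb:ℝ)), binomPMF n c pb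
        ≤ ∑ c ∈ (range (n+1)).filter (fun c : ℕ => δ*n ≤ |(c:ℝ) - n*pb|), binomPMF n c pb :=
          Finset.sum_le_sum_of_subset_of_nonneg hsub fun i _ _ => binomPMF_nonneg h0b h1b n i
      _ ≤ n * (pb*(1-pb)) / (δ*n)^2 := chebyshev h0b h1b htpos n
  have final : n * (pa*(1-pa)) / (δ*n)^2 + n * (pb*(1-pb)) / (δ*n)^2
      = ((pa*(1-pa) + pb*(1-pb)) / δ^2) / n := by
    field_simp
  linarith [hP1, hP2]

lemma lt_add_eq_tendsto_zero (h0b : 0 ≤ pb) (hlt : pb < pa) (h1a : pa ≤ 1) :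
    Tendsto (fun n => ltKernel n (pa, pb) + eqKer n (pa, pb)) atTop (𝓝 0) := by
  have h0a : 0 ≤ pa := le_trans h0b hlt.le
  have h1b : pb ≤ 1 := le_trans hlt.le h1a
  refine squeeze_zero' ?_ ?_
    (tendsto_const_div_atTop_nhds_zero_nat ((pa*(1-pa) + pb*(1-pb)) / ((pa-pb)/2)^2))
  · exact Eventually.of_forall fun n => add_nonneg (ltKernel_nonneg h0a h1a h0b h1b n)
      (eqKer_nonneg h0a h1a h0b h1b n)
  · filter_upwards [eventually_ge_atTop 1] with n hn
    exact le_part_bound h0b hlt h1a hn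

lemma gt_tendsto_one (h0b : 0 ≤ pb) (hlt : pb < pa) (h1a : pa ≤ 1) :
    Tendsto (fun n => gtKernel n (pa, pb)) atTop (𝓝 1) := by
  have h := lt_add_eq_tendsto_zero h0b hlt h1a
  have he : ∀ n, gtKernel n (pa, pb) = 1 - (ltKernel n (pa,pb) + eqKer n (pa,pb)) := by
    intro n
    have := kernel_total n (pa, pb)
    linarith
  have ht : Tendsto (fun n => 1 - (ltKernel n (pa,pb) + eqKer n (pa,pb))) atTop (𝓝 (1 - 0)) :=
    tendsto_const_nhds.sub h
  rw [sub_zero] at ht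
  exact ht.congr fun n => (he n).symm

lemma lt_tendsto_zero (h0b : 0 ≤ pb) (hlt : pb < pa) (h1a : pa ≤ 1) :
    Tendsto (fun n => ltKernel n (pa, pb)) atTop (𝓝 0) := by
  have h0a : 0 ≤ pa := le_trans h0b hlt.le
  have h1b : pb ≤ 1 := le_trans hlt.le h1a
  refine squeeze_zero (fun n => ltKernel_nonneg h0a h1a h0b h1b n) (fun n => ?_)
    (lt_add_eq_tendsto_zero h0b hlt h1a)
  have := eqKer_nonneg h0a h1a h0b h1b n
  linarith

lemma eqKer_diag (p : ℝ) (n : ℕ) : eqKer n (p, p) = Ak p 0 n := by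
  unfold eqKer Ak
  exact Finset.sum_congr rfl fun c _ => by rw [Nat.add_zero]

lemma gt_diag_tendsto_half {p : ℝ} (hp0 : 0 < p) (hp1 : p < 1) :
    Tendsto (fun n => gtKernel n (p, p)) atTop (𝓝 (1/2)) := by
  have he : Tendsto (fun n => eqKer n (p, p)) atTop (𝓝 0) := by
    have := Ak_tendsto_zero hp0 hp1
    exact this.congr fun n => (eqKer_diag p n).symm
  have hrepr : ∀ n, gtKernel n (p,p) = (1 - eqKer n (p,p))/2 := by
    intro n
    have h1 := kernel_total n (p, p)
    have h2 := ltKernel_swap n p p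
    linarith
  have ht : Tendsto (fun n => (1 - eqKer n (p,p))/2) atTop (𝓝 ((1 - 0)/2)) :=
    (tendsto_const_nhds.sub he).div_const _
  rw [show ((1:ℝ)-0)/2 = 1/2 by norm_num] at ht
  exact ht.congr fun n => (hrepr n).symm

lemma lt_diag_tendsto_half {p : ℝ} (hp0 : 0 < p) (hp1 : p < 1) :
    Tendsto (fun n => ltKernel n (p, p)) atTop (𝓝 (1/2)) :=
  (gt_diag_tendsto_half hp0 hp1).congr fun n => (ltKernel_swap n p p).symm

end limits

open Finset

/-! ### Continuity and measurability -/

lemma continuous_binomPMF (n c : ℕ) : Continuous fun p : ℝ => binomPMF n c p := by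
  unfold binomPMF
  fun_prop

abbrev Ω := unitInterval × unitInterval

noncomputable def φ (θ : Ω) : ℝ × ℝ := ((θ.1 : ℝ), (θ.2 : ℝ))

lemma continuous_phi : Continuous φ :=
  (continuous_subtype_val.comp continuous_fst).prodMk
    (continuous_subtype_val.comp continuous_snd)

lemma continuous_biLik (L : ℕ) (z : ℕ × ℕ) : Continuous (biLik L z) := by
  unfold biLik
  exact ((continuous_binomPMF _ _).comp continuous_fst).mul
    ((continuous_binomPMF _ _).comp continuous_snd)

lemma continuous_gtKernel (n : ℕ) : Continuous (gtKernel n) := by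
  unfold gtKernel
  refine continuous_finset_sum _ fun cb _ => continuous_finset_sum _ fun ca _ => ?_
  exact ((continuous_binomPMF _ _).comp continuous_fst).mul
    ((continuous_binomPMF _ _).comp continuous_snd)

lemma continuous_ltKernel (n : ℕ) : Continuous (ltKernel n) := by
  unfold ltKernel
  refine continuous_finset_sum _ fun cb _ => continuous_finset_sum _ fun ca _ => ?_
  exact ((continuous_binomPMF _ _).comp continuous_fst).mul
    ((continuous_binomPMF _ _).comp continuous_snd)

lemma biLik_bounds (L : ℕ) (z : ℕ × ℕ) (θ : Ω) :
    0 ≤ biLik L z (φ θ) ∧ biLik L z (φ θ) ≤ 1 := by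
  obtain ⟨h1, h2⟩ := θ.1.2
  obtain ⟨h3, h4⟩ := θ.2.2
  constructor
  · exact mul_nonneg (binomPMF_nonneg h1 h2 _ _) (binomPMF_nonneg h3 h4 _ _)
  · exact mul_le_one₀ (binomPMF_le_one h1 h2 _ _) (binomPMF_nonneg h3 h4 _ _)
      (binomPMF_le_one h3 h4 _ _)

lemma gtKernel_bounds (n : ℕ) (θ : Ω) :
    0 ≤ gtKernel n (φ θ) ∧ gtKernel n (φ θ) ≤ 1 := by
  obtain ⟨h1, h2⟩ := θ.1.2
  obtain ⟨h3, h4⟩ := θ.2.2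
  have ht := kernel_total n (φ θ)
  have hg := gtKernel_nonneg h1 h2 h3 h4 n
  have hlt := ltKernel_nonneg h1 h2 h3 h4 n
  have heq := eqKer_nonneg h1 h2 h3 h4 n
  exact ⟨hg, by simp only [φ] at *; linarith⟩

lemma ltKernel_bounds (n : ℕ) (θ : Ω) :
    0 ≤ ltKernel n (φ θ) ∧ ltKernel n (φ θ) ≤ 1 := by
  obtain ⟨h1, h2⟩ := θ.1.2
  obtain ⟨h3, h4⟩ := θ.2.2
  have ht := kernel_total n (φ θ)
  have hg := gtKernel_nonneg h1 h2 h3 h4 n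
  have hlt := ltKernel_nonneg h1 h2 h3 h4 n
  have heq := eqKer_nonneg h1 h2 h3 h4 n
  exact ⟨hlt, by simp only [φ] at *; linarith⟩


end OddsAux

open OddsAux in
/-- Proposition 1(c): as `L' → ∞`, the posterior callback odds ratio converges to
the dampened ratio of posterior discrimination probabilities. -/
theorem odds_ratio_limit_infinite_applications
    (L : ℕ) (hL : 1 ≤ L) (z : ℕ × ℕ) (hz : z.1 ≤ L ∧ z.2 ≤ L)
    (G : Measure (unitInterval × unitInterval)) [IsProbabilityMeasure G]
    (hcorner : G ({((0 : unitInterval), (0 : unitInterval)),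
        ((1 : unitInterval), (1 : unitInterval))} : Set (unitInterval × unitInterval)) = 0)
    (hf : 0 < margPMF G L z)
    (hQ : 0 < postProb G L z {p | p.1 = p.2} / 2 + postProb G L z {p | p.1 < p.2}) :
    Tendsto (fun L' => thetaOdds G L z L') atTop
      (𝓝 ((postProb G L z {p | p.1 = p.2} / 2 + postProb G L z {p | p.1 > p.2}) /
          (postProb G L z {p | p.1 = p.2} / 2 + postProb G L z {p | p.1 < p.2}))) := by
  classical
  -- the three indicator integrals
  set Ie := ∫ θ : Ω, ({p : ℝ × ℝ | p.1 = p.2}).indicator (fun _ => (1:ℝ)) (φ θ) *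
      biLik L z (φ θ) ∂G with hIe
  set Ig := ∫ θ : Ω, ({p : ℝ × ℝ | p.1 > p.2}).indicator (fun _ => (1:ℝ)) (φ θ) *
      biLik L z (φ θ) ∂G with hIg
  set Il := ∫ θ : Ω, ({p : ℝ × ℝ | p.1 < p.2}).indicator (fun _ => (1:ℝ)) (φ θ) *
      biLik L z (φ θ) ∂G with hIl
  have hmeasE : MeasurableSet {p : ℝ × ℝ | p.1 = p.2} :=
    measurableSet_eq_fun measurable_fst measurable_snd
  have hmeasG : MeasurableSet {p : ℝ × ℝ | p.1 > p.2} :=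
    measurableSet_lt measurable_snd measurable_fst
  have hmeasL : MeasurableSet {p : ℝ × ℝ | p.1 < p.2} :=
    measurableSet_lt measurable_fst measurable_snd
  have hmeasφ : Measurable φ := continuous_phi.measurable
  have hmeasBi : Measurable fun θ : Ω => biLik L z (φ θ) :=
    ((continuous_biLik L z).comp continuous_phi).measurable
  -- integrability of indicator integrands
  have hInt : ∀ (A : Set (ℝ × ℝ)), MeasurableSet A →
      Integrable (fun θ : Ω => A.indicator (fun _ => (1:ℝ)) (φ θ) * biLik L z (φ θ)) G := by
    intro A hA
    have hm : Measurable fun θ : Ω => A.indicator (fun _ => (1:ℝ)) (φ θ) * biLik L z (φ θ) :=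
      ((measurable_const.indicator hA).comp hmeasφ).mul hmeasBi
    refine (integrable_const (1:ℝ)).mono' hm.aestronglyMeasurable ?_
    refine Eventually.of_forall fun θ => ?_
    have hb := biLik_bounds L z θ
    have hind : 0 ≤ A.indicator (fun _ => (1:ℝ)) (φ θ) ∧
        A.indicator (fun _ => (1:ℝ)) (φ θ) ≤ 1 := by
      unfold Set.indicator
      split_ifs <;> norm_num
    rw [Real.norm_eq_abs, abs_of_nonneg (mul_nonneg hind.1 hb.1)]
    exact mul_le_one₀ hind.2 hb.1 hb.2
  -- a.e. exclusion of corners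
  have hae : ∀ᵐ θ : Ω ∂G, θ ≠ ((0 : unitInterval), (0 : unitInterval)) ∧
      θ ≠ ((1 : unitInterval), (1 : unitInterval)) := by
    have h := (measure_eq_zero_iff_ae_notMem).1 hcorner
    filter_upwards [h] with θ hθ
    simp only [Set.mem_insert_iff, Set.mem_singleton_iff, not_or] at hθ
    exact hθ
  -- dominated convergence for the numerator
  have hN : Tendsto (fun L' => Nval G L z L') atTop (𝓝 (Ie/2 + Ig)) := by
    have hlim : Tendsto (fun L' => Nval G L z L') atTop
        (𝓝 (∫ θ : Ω, (({p : ℝ × ℝ | p.1 = p.2}).indicator (fun _ => (1:ℝ)) (φ θ) / 2 +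
          ({p : ℝ × ℝ | p.1 > p.2}).indicator (fun _ => (1:ℝ)) (φ θ)) * biLik L z (φ θ) ∂G)) := by
      refine tendsto_integral_of_dominated_convergence (fun _ => (1:ℝ)) ?_ (integrable_const 1) ?_ ?_
      · intro n
        exact (((continuous_gtKernel n).comp continuous_phi).mul
          ((continuous_biLik L z).comp continuous_phi)).aestronglyMeasurable
      · intro n
        refine Eventually.of_forall fun θ => ?_
        have hb := biLik_bounds L z θ
        have hg := gtKernel_bounds n θ
        show |gtKernel n (φ θ) * biLik L z (φ θ)| ≤ (1:ℝ)
        rw [abs_of_nonneg (mul_nonneg hg.1 hb.1)]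
        exact mul_le_one₀ hg.2 hb.1 hb.2
      · filter_upwards [hae] with θ hθ
        obtain ⟨h01, h11⟩ := θ.1.2
        obtain ⟨h02, h12⟩ := θ.2.2
        rcases lt_trichotomy ((θ.1 : ℝ)) ((θ.2 : ℝ)) with h | h | h
        · -- θ1 < θ2 : gtKernel → 0
          have hgt : Tendsto (fun n => gtKernel n (φ θ)) atTop (𝓝 0) := by
            have hsw : ∀ n, gtKernel n (φ θ) = ltKernel n ((θ.2:ℝ), (θ.1:ℝ)) := fun n =>
              (ltKernel_swap n _ _).symm
            exact (lt_tendsto_zero h01 h h12).congr fun n => (hsw n).symm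
          have := hgt.mul_const (biLik L z (φ θ))
          rw [zero_mul] at this
          convert this using 2 with n
          · rfl
          have he : φ θ ∉ {p : ℝ × ℝ | p.1 = p.2} := by
            simp only [Set.mem_setOf_eq, φ]
            exact ne_of_lt h
          have hg : φ θ ∉ {p : ℝ × ℝ | p.1 > p.2} := by
            simp only [Set.mem_setOf_eq, φ]
            exact not_lt.2 h.le
          rw [Set.indicator_of_notMem he, Set.indicator_of_notMem hg]
          norm_num
        · -- diagonal
          have hne0 : (θ.1 : ℝ) ≠ 0 := by
            intro hc
            apply hθ.1
            have e1 : θ.1 = (0 : unitInterval) := Subtype.ext hc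
            have e2 : θ.2 = (0 : unitInterval) := Subtype.ext (by rw [← h, hc]; simp)
            rw [Prod.ext_iff]
            exact ⟨e1, e2⟩
          have hne1 : (θ.1 : ℝ) ≠ 1 := by
            intro hc
            apply hθ.2
            have e1 : θ.1 = (1 : unitInterval) := Subtype.ext hc
            have e2 : θ.2 = (1 : unitInterval) := Subtype.ext (by rw [← h, hc]; simp)
            rw [Prod.ext_iff]
            exact ⟨e1, e2⟩
          have hgt : Tendsto (fun n => gtKernel n (φ θ)) atTop (𝓝 (1/2)) := by
            have hd := gt_diag_tendsto_half (lt_of_le_of_ne h01 (Ne.symm hne0))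
              (lt_of_le_of_ne h11 hne1)
            refine hd.congr fun n => ?_
            have : φ θ = ((θ.1:ℝ), (θ.1:ℝ)) := by
              simp only [φ]
              rw [← h]
            rw [this]
          have := hgt.mul_const (biLik L z (φ θ))
          convert this using 2 with n
          · rfl
          have he : φ θ ∈ {p : ℝ × ℝ | p.1 = p.2} := h
          have hg : φ θ ∉ {p : ℝ × ℝ | p.1 > p.2} := by
            simp only [Set.mem_setOf_eq, φ]
            exact not_lt.2 h.le
          rw [Set.indicator_of_mem he, Set.indicator_of_notMem hg]
          norm_num
        · -- θ1 > θ2 : gtKernel → 1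
          have hgt : Tendsto (fun n => gtKernel n (φ θ)) atTop (𝓝 1) :=
            gt_tendsto_one h02 h h11
          have := hgt.mul_const (biLik L z (φ θ))
          rw [one_mul] at this
          convert this using 2 with n
          · rfl
          have he : φ θ ∉ {p : ℝ × ℝ | p.1 = p.2} := by
            simp only [Set.mem_setOf_eq, φ]
            exact ne_of_gt h
          have hg : φ θ ∈ {p : ℝ × ℝ | p.1 > p.2} := h
          rw [Set.indicator_of_notMem he, Set.indicator_of_mem hg]
          norm_num
    have hval : (∫ θ : Ω, (({p : ℝ × ℝ | p.1 = p.2}).indicator (fun _ => (1:ℝ)) (φ θ) / 2 +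
          ({p : ℝ × ℝ | p.1 > p.2}).indicator (fun _ => (1:ℝ)) (φ θ)) * biLik L z (φ θ) ∂G)
        = Ie/2 + Ig := by
      have hsplit : ∀ θ : Ω, (({p : ℝ × ℝ | p.1 = p.2}).indicator (fun _ => (1:ℝ)) (φ θ) / 2 +
          ({p : ℝ × ℝ | p.1 > p.2}).indicator (fun _ => (1:ℝ)) (φ θ)) * biLik L z (φ θ)
          = (({p : ℝ × ℝ | p.1 = p.2}).indicator (fun _ => (1:ℝ)) (φ θ) * biLik L z (φ θ)) / 2 +
            ({p : ℝ × ℝ | p.1 > p.2}).indicator (fun _ => (1:ℝ)) (φ θ) * biLik L z (φ θ) := by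
        intro θ
        ring
      rw [integral_congr_ae (Eventually.of_forall hsplit)]
      rw [integral_add ((hInt _ hmeasE).div_const 2) (hInt _ hmeasG), integral_div]
    rw [hval] at hlim
    exact hlim
  -- dominated convergence for the denominator
  have hD : Tendsto (fun L' => Dval G L z L') atTop (𝓝 (Ie/2 + Il)) := by
    have hlim : Tendsto (fun L' => Dval G L z L') atTop
        (𝓝 (∫ θ : Ω, (({p : ℝ × ℝ | p.1 = p.2}).indicator (fun _ => (1:ℝ)) (φ θ) / 2 +
          ({p : ℝ × ℝ | p.1 < p.2}).indicator (fun _ => (1:ℝ)) (φ θ)) * biLik L z (φ θ) ∂G)) := by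
      refine tendsto_integral_of_dominated_convergence (fun _ => (1:ℝ)) ?_ (integrable_const 1) ?_ ?_
      · intro n
        exact (((continuous_ltKernel n).comp continuous_phi).mul
          ((continuous_biLik L z).comp continuous_phi)).aestronglyMeasurable
      · intro n
        refine Eventually.of_forall fun θ => ?_
        have hb := biLik_bounds L z θ
        have hg := ltKernel_bounds n θ
        show |ltKernel n (φ θ) * biLik L z (φ θ)| ≤ (1:ℝ)
        rw [abs_of_nonneg (mul_nonneg hg.1 hb.1)]
        exact mul_le_one₀ hg.2 hb.1 hb.2
      · filter_upwards [hae] with θ hθ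
        obtain ⟨h01, h11⟩ := θ.1.2
        obtain ⟨h02, h12⟩ := θ.2.2
        rcases lt_trichotomy ((θ.1 : ℝ)) ((θ.2 : ℝ)) with h | h | h
        · -- θ1 < θ2 : ltKernel → 1
          have hgt : Tendsto (fun n => ltKernel n (φ θ)) atTop (𝓝 1) := by
            have hsw : ∀ n, ltKernel n (φ θ) = gtKernel n ((θ.2:ℝ), (θ.1:ℝ)) := fun n =>
              ltKernel_swap n _ _
            exact (gt_tendsto_one h01 h h12).congr fun n => (hsw n).symm
          have := hgt.mul_const (biLik L z (φ θ))
          rw [one_mul] at this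
          convert this using 2 with n
          · rfl
          have he : φ θ ∉ {p : ℝ × ℝ | p.1 = p.2} := by
            simp only [Set.mem_setOf_eq, φ]
            exact ne_of_lt h
          have hg : φ θ ∈ {p : ℝ × ℝ | p.1 < p.2} := h
          rw [Set.indicator_of_notMem he, Set.indicator_of_mem hg]
          norm_num
        · -- diagonal
          have hne0 : (θ.1 : ℝ) ≠ 0 := by
            intro hc
            apply hθ.1
            have e1 : θ.1 = (0 : unitInterval) := Subtype.ext hc
            have e2 : θ.2 = (0 : unitInterval) := Subtype.ext (by rw [← h, hc]; simp)
            rw [Prod.ext_iff]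
            exact ⟨e1, e2⟩
          have hne1 : (θ.1 : ℝ) ≠ 1 := by
            intro hc
            apply hθ.2
            have e1 : θ.1 = (1 : unitInterval) := Subtype.ext hc
            have e2 : θ.2 = (1 : unitInterval) := Subtype.ext (by rw [← h, hc]; simp)
            rw [Prod.ext_iff]
            exact ⟨e1, e2⟩
          have hgt : Tendsto (fun n => ltKernel n (φ θ)) atTop (𝓝 (1/2)) := by
            have hd := lt_diag_tendsto_half (lt_of_le_of_ne h01 (Ne.symm hne0))
              (lt_of_le_of_ne h11 hne1)
            refine hd.congr fun n => ?_
            have : φ θ = ((θ.1:ℝ), (θ.1:ℝ)) := by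
              simp only [φ]
              rw [← h]
            rw [this]
          have := hgt.mul_const (biLik L z (φ θ))
          convert this using 2 with n
          · rfl
          have he : φ θ ∈ {p : ℝ × ℝ | p.1 = p.2} := h
          have hg : φ θ ∉ {p : ℝ × ℝ | p.1 < p.2} := by
            simp only [Set.mem_setOf_eq, φ]
            exact not_lt.2 h.ge
          rw [Set.indicator_of_mem he, Set.indicator_of_notMem hg]
          norm_num
        · -- θ1 > θ2 : ltKernel → 0
          have hgt : Tendsto (fun n => ltKernel n (φ θ)) atTop (𝓝 0) :=
            lt_tendsto_zero h02 h h11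
          have := hgt.mul_const (biLik L z (φ θ))
          rw [zero_mul] at this
          convert this using 2 with n
          · rfl
          have he : φ θ ∉ {p : ℝ × ℝ | p.1 = p.2} := by
            simp only [Set.mem_setOf_eq, φ]
            exact ne_of_gt h
          have hg : φ θ ∉ {p : ℝ × ℝ | p.1 < p.2} := by
            simp only [Set.mem_setOf_eq, φ]
            exact not_lt.2 h.le
          rw [Set.indicator_of_notMem he, Set.indicator_of_notMem hg]
          norm_num
    have hval : (∫ θ : Ω, (({p : ℝ × ℝ | p.1 = p.2}).indicator (fun _ => (1:ℝ)) (φ θ) / 2 +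
          ({p : ℝ × ℝ | p.1 < p.2}).indicator (fun _ => (1:ℝ)) (φ θ)) * biLik L z (φ θ) ∂G)
        = Ie/2 + Il := by
      have hsplit : ∀ θ : Ω, (({p : ℝ × ℝ | p.1 = p.2}).indicator (fun _ => (1:ℝ)) (φ θ) / 2 +
          ({p : ℝ × ℝ | p.1 < p.2}).indicator (fun _ => (1:ℝ)) (φ θ)) * biLik L z (φ θ)
          = (({p : ℝ × ℝ | p.1 = p.2}).indicator (fun _ => (1:ℝ)) (φ θ) * biLik L z (φ θ)) / 2 +
            ({p : ℝ × ℝ | p.1 < p.2}).indicator (fun _ => (1:ℝ)) (φ θ) * biLik L z (φ θ) := by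
        intro θ
        ring
      rw [integral_congr_ae (Eventually.of_forall hsplit)]
      rw [integral_add ((hInt _ hmeasE).div_const 2) (hInt _ hmeasL), integral_div]
    rw [hval] at hlim
    exact hlim
  -- identify postProb with the integrals
  have hfne : margPMF G L z ≠ 0 := ne_of_gt hf
  have hPe : postProb G L z {p : ℝ × ℝ | p.1 = p.2} = Ie / margPMF G L z := rfl
  have hPg : postProb G L z {p : ℝ × ℝ | p.1 > p.2} = Ig / margPMF G L z := rfl
  have hPl : postProb G L z {p : ℝ × ℝ | p.1 < p.2} = Il / margPMF G L z := rfl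
  have hQ' : 0 < Ie/2 + Il := by
    have he : postProb G L z {p : ℝ × ℝ | p.1 = p.2} / 2 +
        postProb G L z {p : ℝ × ℝ | p.1 < p.2} = (Ie/2 + Il) / margPMF G L z := by
      rw [hPe, hPl]
      ring
    rw [he] at hQ
    have h3 := mul_pos hQ hf
    rwa [div_mul_cancel₀ _ hfne] at h3
  have hDne : Ie/2 + Il ≠ 0 := ne_of_gt hQ'
  have hdiv : Tendsto (fun L' => thetaOdds G L z L') atTop (𝓝 ((Ie/2 + Ig) / (Ie/2 + Il))) := by
    simp only [thetaOdds]
    exact hN.div hD hDne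
  have hgoal : (postProb G L z {p : ℝ × ℝ | p.1 = p.2} / 2 +
        postProb G L z {p : ℝ × ℝ | p.1 > p.2}) /
      (postProb G L z {p : ℝ × ℝ | p.1 = p.2} / 2 + postProb G L z {p : ℝ × ℝ | p.1 < p.2})
      = (Ie/2 + Ig) / (Ie/2 + Il) := by
    rw [hPe, hPg, hPl,
      show Ie / margPMF G L z / 2 + Ig / margPMF G L z = (Ie/2 + Ig) / margPMF G L z by ring,
      show Ie / margPMF G L z / 2 + Il / margPMF G L z = (Ie/2 + Il) / margPMF G L z by ring,
      div_div_div_cancel_right₀ hfne]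
  rw [hgoal]
  exact hdiv
end

section
/- Fix a number of trials L ≥ 1 and a callback pattern z ∈ {0,…,L}^2. Let G be a Borel probability measure on [0,1]^2 assigning probability zero to the two points (0,0) and (1,1). Then, as L' → ∞, N(G; z, L') converges to ∫ ( (1/2)·1{p_a = p_b} + 1{p_a > p_b} ) p(z | θ) dG(θ), and D(G; z, L') converges to ∫ ( (1/2)·1{p_a = p_b} + 1{p_a < p_b} ) p(z | θ) dG(θ). (Dominated-convergence step in the proof of Proposition 1(c).) -/
open MeasureTheory Filter Topology

open Finset Real


lemma sum_binomPMF (n : ℕ) (p : ℝ) : ∑ c ∈ range (n + 1), binomPMF n c p = 1 := by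
  calc ∑ c ∈ range (n + 1), binomPMF n c p
      = ∑ c ∈ range (n + 1), p ^ c * (1 - p) ^ (n - c) * (n.choose c : ℝ) :=
        Finset.sum_congr rfl (fun c _ => by unfold binomPMF; ring)
    _ = (p + (1 - p)) ^ n := (add_pow p (1 - p) n).symm
    _ = 1 := by norm_num

lemma binomPMF_succ_shift (m : ℕ) (p : ℝ) (c : ℕ) :
    ((c:ℝ) + 1) * binomPMF (m+1) (c+1) p = ((m:ℝ)+1) * p * binomPMF m c p := by
  unfold binomPMF
  have h := Nat.add_one_mul_choose_eq m c
  have h2 : ((m:ℝ)+1) * (m.choose c : ℝ) = ((m+1).choose (c+1) : ℝ) * ((c:ℝ)+1) := by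
    exact_mod_cast congrArg (Nat.cast : ℕ → ℝ) h
  have hsub : m + 1 - (c + 1) = m - c := by omega
  rw [hsub]
  linear_combination (-(p ^ (c+1) * (1 - p) ^ (m - c))) * h2

lemma sum_mul_binomPMF (n : ℕ) (p : ℝ) :
    ∑ c ∈ range (n + 1), (c : ℝ) * binomPMF n c p = n * p := by
  cases n with
  | zero => simp
  | succ m =>
    rw [Finset.sum_range_succ']
    simp only [Nat.cast_zero, zero_mul, add_zero]
    calc ∑ c ∈ range (m+1), (↑(c+1) : ℝ) * binomPMF (m+1) (c+1) p
        = ∑ c ∈ range (m+1), ((m:ℝ)+1) * p * binomPMF m c p :=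
          Finset.sum_congr rfl (fun c _ => by
            rw [← binomPMF_succ_shift m p c]; push_cast; ring)
      _ = ((m:ℝ)+1) * p := by rw [← Finset.mul_sum, sum_binomPMF]; ring
      _ = (↑(m+1) : ℝ) * p := by push_cast; ring

lemma sum_mul2_binomPMF (n : ℕ) (p : ℝ) :
    ∑ c ∈ range (n + 1), (c : ℝ) * ((c:ℝ) - 1) * binomPMF n c p
      = n * (n - 1) * p^2 := by
  cases n with
  | zero => simp
  | succ m =>
    rw [Finset.sum_range_succ']
    simp only [Nat.cast_zero, zero_mul, add_zero]
    have step1 : ∀ c : ℕ, (↑(c+1):ℝ) * ((↑(c+1):ℝ) - 1) * binomPMF (m+1) (c+1) p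
        = ((m:ℝ)+1) * p * ((c:ℝ) * binomPMF m c p) := by
      intro c
      have := binomPMF_succ_shift m p c
      push_cast
      nlinarith [this]
    calc ∑ c ∈ range (m+1), (↑(c+1):ℝ) * ((↑(c+1):ℝ) - 1) * binomPMF (m+1) (c+1) p
        = ((m:ℝ)+1) * p * ∑ c ∈ range (m+1), (c:ℝ) * binomPMF m c p := by
          rw [Finset.mul_sum]; exact Finset.sum_congr rfl (fun c _ => step1 c)
      _ = ((m:ℝ)+1) * p * ((m:ℝ) * p) := by rw [sum_mul_binomPMF]
      _ = (↑(m+1):ℝ) * ((↑(m+1):ℝ) - 1) * p^2 := by push_cast; ring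

lemma sum_sq_dev_binomPMF (n : ℕ) (p : ℝ) :
    ∑ c ∈ range (n + 1), ((c:ℝ) - n * p)^2 * binomPMF n c p = n * p * (1 - p) := by
  have e : ∀ c : ℕ, ((c:ℝ) - n*p)^2 * binomPMF n c p
      = (c:ℝ)*((c:ℝ)-1) * binomPMF n c p
        + (1 - 2*(n:ℝ)*p) * ((c:ℝ) * binomPMF n c p)
        + (n:ℝ)^2*p^2 * binomPMF n c p := by
    intro c; ring
  rw [Finset.sum_congr rfl (fun c _ => e c)]
  rw [Finset.sum_add_distrib, Finset.sum_add_distrib, ← Finset.mul_sum, ← Finset.mul_sum,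
    sum_mul2_binomPMF, sum_mul_binomPMF, sum_binomPMF]
  ring


lemma binomPMF_nonneg {p : ℝ} (h0 : 0 ≤ p) (h1 : p ≤ 1) (n c : ℕ) : 0 ≤ binomPMF n c p := by
  have h2 : (0:ℝ) ≤ 1 - p := by linarith
  unfold binomPMF
  positivity


lemma binomPMF_le_one {p : ℝ} (h0 : 0 ≤ p) (h1 : p ≤ 1) {n c : ℕ} (hc : c ≤ n) :
    binomPMF n c p ≤ 1 := by
  calc binomPMF n c p ≤ ∑ c ∈ range (n+1), binomPMF n c p :=
        Finset.single_le_sum (fun i _ => binomPMF_nonneg h0 h1 n i)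
          (Finset.mem_range.mpr (Nat.lt_succ_of_le hc))
    _ = 1 := sum_binomPMF n p

noncomputable def eqKernel (L' : ℕ) (θ : ℝ × ℝ) : ℝ :=
  ∑ c ∈ Finset.range (L' + 1), binomPMF L' c θ.1 * binomPMF L' c θ.2

lemma gtKernel_eq (n : ℕ) (θ : ℝ × ℝ) :
    gtKernel n θ = ∑ cb ∈ range (n+1), ∑ ca ∈ range (n+1),
      if cb < ca then binomPMF n ca θ.1 * binomPMF n cb θ.2 else 0 := by
  unfold gtKernel
  have hext : ∑ cb ∈ range n, ∑ ca ∈ Finset.Icc (cb + 1) n,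
        binomPMF n ca θ.1 * binomPMF n cb θ.2
      = ∑ cb ∈ range (n+1), ∑ ca ∈ Finset.Icc (cb + 1) n,
        binomPMF n ca θ.1 * binomPMF n cb θ.2 := by
    apply Finset.sum_subset
    · intro x hx; simp at hx ⊢; omega
    · intro x hx hnx
      have : x = n := by simp at hx hnx; omega
      subst this
      rw [Finset.Icc_eq_empty_iff.mpr (by omega)]
      simp
  rw [hext]
  apply Finset.sum_congr rfl
  intro cb _
  rw [← Finset.sum_filter]
  congr 1
  ext a
  simp only [Finset.mem_Icc, Finset.mem_filter, Finset.mem_range]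
  omega

lemma ltKernel_eq (n : ℕ) (θ : ℝ × ℝ) :
    ltKernel n θ = ∑ cb ∈ range (n+1), ∑ ca ∈ range (n+1),
      if ca < cb then binomPMF n ca θ.1 * binomPMF n cb θ.2 else 0 := by
  unfold ltKernel
  have hext : ∑ cb ∈ Finset.Icc 1 n, ∑ ca ∈ Finset.range cb,
        binomPMF n ca θ.1 * binomPMF n cb θ.2
      = ∑ cb ∈ range (n+1), ∑ ca ∈ Finset.range cb,
        binomPMF n ca θ.1 * binomPMF n cb θ.2 := by
    apply Finset.sum_subset
    · intro x hx; simp at hx ⊢; omega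
    · intro x hx hnx
      have : x = 0 := by simp at hx hnx; omega
      subst this; simp
  rw [hext]
  apply Finset.sum_congr rfl
  intro cb hcb
  rw [← Finset.sum_filter]
  congr 1
  ext a
  simp only [Finset.mem_filter, Finset.mem_range] at *
  omega

lemma eqKernel_eq (n : ℕ) (θ : ℝ × ℝ) :
    eqKernel n θ = ∑ cb ∈ range (n+1), ∑ ca ∈ range (n+1),
      if ca = cb then binomPMF n ca θ.1 * binomPMF n cb θ.2 else 0 := by
  unfold eqKernel
  apply Finset.sum_congr rfl
  intro cb hcb
  rw [Finset.sum_ite_eq' (range (n+1)) cb (fun ca => binomPMF n ca θ.1 * binomPMF n cb θ.2)]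
  simp [hcb]

lemma kernel_trichotomy (n : ℕ) (θ : ℝ × ℝ) :
    gtKernel n θ + ltKernel n θ + eqKernel n θ = 1 := by
  rw [gtKernel_eq, ltKernel_eq, eqKernel_eq]
  rw [← Finset.sum_add_distrib, ← Finset.sum_add_distrib]
  have h : ∀ cb ∈ range (n+1),
      ((∑ ca ∈ range (n+1), if cb < ca then binomPMF n ca θ.1 * binomPMF n cb θ.2 else 0)
      + (∑ ca ∈ range (n+1), if ca < cb then binomPMF n ca θ.1 * binomPMF n cb θ.2 else 0))
      + (∑ ca ∈ range (n+1), if ca = cb then binomPMF n ca θ.1 * binomPMF n cb θ.2 else 0)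
      = binomPMF n cb θ.2 := by
    intro cb _
    rw [← Finset.sum_add_distrib, ← Finset.sum_add_distrib]
    have h2 : ∀ ca ∈ range (n+1),
        (((if cb < ca then binomPMF n ca θ.1 * binomPMF n cb θ.2 else 0)
        + (if ca < cb then binomPMF n ca θ.1 * binomPMF n cb θ.2 else 0))
        + (if ca = cb then binomPMF n ca θ.1 * binomPMF n cb θ.2 else 0))
        = binomPMF n ca θ.1 * binomPMF n cb θ.2 := by
      intro ca _
      rcases lt_trichotomy ca cb with h | h | h
      · simp [h, not_lt.mpr h.le, h.ne]
      · simp [h]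
      · simp [h, not_lt.mpr h.le, h.ne']
    rw [Finset.sum_congr rfl h2, ← Finset.sum_mul, sum_binomPMF, one_mul]
  rw [Finset.sum_congr rfl h, sum_binomPMF]

lemma ltKernel_swap (n : ℕ) (x y : ℝ) :
    ltKernel n (x, y) = gtKernel n (y, x) := by
  rw [ltKernel_eq, gtKernel_eq, Finset.sum_comm]
  apply Finset.sum_congr rfl; intro ca _
  apply Finset.sum_congr rfl; intro cb _
  simp only
  rcases lt_or_ge ca cb with h | h
  · simp [h, mul_comm]
  · simp [not_lt.mpr h]


lemma binom_tail {p t : ℝ} (h0 : 0 ≤ p) (h1 : p ≤ 1) (ht : 0 < t) (n : ℕ)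
    (T : Finset ℕ) (hT : T ⊆ range (n+1)) (hdev : ∀ c ∈ T, t ≤ |(c:ℝ) - n*p|) :
    ∑ c ∈ T, binomPMF n c p ≤ n * p * (1-p) / t^2 := by
  have step1 : ∑ c ∈ T, binomPMF n c p
      ≤ ∑ c ∈ T, ((c:ℝ) - n*p)^2 / t^2 * binomPMF n c p := by
    apply Finset.sum_le_sum
    intro c hc
    have hd := hdev c hc
    have h2 : t^2 ≤ ((c:ℝ) - n*p)^2 := by
      have := sq_abs ((c:ℝ) - n*p)
      nlinarith [abs_nonneg ((c:ℝ) - n*p)]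
    have hb := binomPMF_nonneg h0 h1 n c
    have : (1:ℝ) ≤ ((c:ℝ) - n*p)^2 / t^2 := by
      rw [le_div_iff₀ (by positivity)]
      linarith
    nlinarith
  have step2 : ∑ c ∈ T, ((c:ℝ) - n*p)^2 / t^2 * binomPMF n c p
      ≤ ∑ c ∈ range (n+1), ((c:ℝ) - n*p)^2 / t^2 * binomPMF n c p := by
    apply Finset.sum_le_sum_of_subset_of_nonneg hT
    intro c _ _
    have hb := binomPMF_nonneg h0 h1 n c
    positivity
  have step3 : ∑ c ∈ range (n+1), ((c:ℝ) - n*p)^2 / t^2 * binomPMF n c p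
      = n * p * (1-p) / t^2 := by
    rw [← sum_sq_dev_binomPMF n p, Finset.sum_div]
    exact Finset.sum_congr rfl (fun c _ => by ring)
  linarith


section
variable {pa pb : ℝ}

lemma ltKernel_nonneg (h0a : 0 ≤ pa) (h1a : pa ≤ 1) (h0b : 0 ≤ pb) (h1b : pb ≤ 1) (n : ℕ) :
    0 ≤ ltKernel n (pa, pb) := by
  rw [ltKernel_eq]
  apply Finset.sum_nonneg; intro cb _
  apply Finset.sum_nonneg; intro ca _
  have := mul_nonneg (binomPMF_nonneg h0a h1a n ca) (binomPMF_nonneg h0b h1b n cb)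
  positivity

lemma eqKernel_nonneg (h0a : 0 ≤ pa) (h1a : pa ≤ 1) (h0b : 0 ≤ pb) (h1b : pb ≤ 1) (n : ℕ) :
    0 ≤ eqKernel n (pa, pb) := by
  apply Finset.sum_nonneg; intro c _
  exact mul_nonneg (binomPMF_nonneg h0a h1a n c) (binomPMF_nonneg h0b h1b n c)

lemma lt_add_eq_le_split (h0a : 0 ≤ pa) (h1a : pa ≤ 1) (h0b : 0 ≤ pb) (h1b : pb ≤ 1)
    (n : ℕ) (m : ℝ) :
    ltKernel n (pa, pb) + eqKernel n (pa, pb)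
      ≤ (∑ c ∈ (range (n+1)).filter (fun c : ℕ => (c:ℝ) ≤ m), binomPMF n c pa)
        + ∑ c ∈ (range (n+1)).filter (fun c : ℕ => m ≤ (c:ℝ)), binomPMF n c pb := by
  have hA : ∑ c ∈ (range (n+1)).filter (fun c : ℕ => (c:ℝ) ≤ m), binomPMF n c pa
      = ∑ cb ∈ range (n+1), ∑ ca ∈ range (n+1),
        if (ca:ℝ) ≤ m then binomPMF n ca pa * binomPMF n cb pb else 0 := by
    have h1 : ∀ cb ∈ range (n+1), (∑ ca ∈ range (n+1),
        if (ca:ℝ) ≤ m then binomPMF n ca pa * binomPMF n cb pb else 0)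
        = (∑ ca ∈ (range (n+1)).filter (fun c : ℕ => (c:ℝ) ≤ m), binomPMF n ca pa)
            * binomPMF n cb pb := by
      intro cb _
      rw [Finset.sum_filter, Finset.sum_mul]
      exact Finset.sum_congr rfl (fun ca _ => by split <;> simp)
    rw [Finset.sum_congr rfl h1, ← Finset.mul_sum, sum_binomPMF, mul_one]
  have hB : ∑ c ∈ (range (n+1)).filter (fun c : ℕ => m ≤ (c:ℝ)), binomPMF n c pb
      = ∑ cb ∈ range (n+1), ∑ ca ∈ range (n+1),
        if m ≤ (cb:ℝ) then binomPMF n ca pa * binomPMF n cb pb else 0 := by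
    have h1 : ∀ cb ∈ range (n+1), (∑ ca ∈ range (n+1),
        if m ≤ (cb:ℝ) then binomPMF n ca pa * binomPMF n cb pb else 0)
        = (if m ≤ (cb:ℝ) then binomPMF n cb pb else 0) := by
      intro cb _
      split
      · rw [← Finset.sum_mul, sum_binomPMF, one_mul]
      · simp
    rw [Finset.sum_congr rfl h1, ← Finset.sum_filter]
  rw [hA, hB, ltKernel_eq, eqKernel_eq, ← Finset.sum_add_distrib, ← Finset.sum_add_distrib]
  apply Finset.sum_le_sum
  intro cb _
  rw [← Finset.sum_add_distrib, ← Finset.sum_add_distrib]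
  apply Finset.sum_le_sum
  intro ca _
  have hf : 0 ≤ binomPMF n ca pa * binomPMF n cb pb :=
    mul_nonneg (binomPMF_nonneg h0a h1a n ca) (binomPMF_nonneg h0b h1b n cb)
  by_cases hle : ca ≤ cb
  · have hcases : (ca:ℝ) ≤ m ∨ m ≤ (cb:ℝ) := by
      by_cases h : (ca:ℝ) ≤ m
      · exact Or.inl h
      · right
        push_neg at h
        have : (ca:ℝ) ≤ (cb:ℝ) := by exact_mod_cast hle
        linarith
    have hlt : ((if ca < cb then binomPMF n ca pa * binomPMF n cb pb else 0)
        + if ca = cb then binomPMF n ca pa * binomPMF n cb pb else 0)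
        ≤ binomPMF n ca pa * binomPMF n cb pb := by
      rcases lt_or_eq_of_le hle with h | h
      · simp [h, h.ne]
      · simp [h, lt_irrefl]
    rcases hcases with h | h
    · rw [if_pos h]
      have : (0:ℝ) ≤ if m ≤ (cb:ℝ) then binomPMF n ca pa * binomPMF n cb pb else 0 := by
        split <;> simp [hf]
      linarith
    · rw [if_pos h]
      have : (0:ℝ) ≤ if (ca:ℝ) ≤ m then binomPMF n ca pa * binomPMF n cb pb else 0 := by
        split <;> simp [hf]
      linarith
  · have h1 : ¬ ca < cb := by omega
    have h2 : ¬ ca = cb := by omega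
    rw [if_neg h1, if_neg h2]
    have ha : (0:ℝ) ≤ if (ca:ℝ) ≤ m then binomPMF n ca pa * binomPMF n cb pb else 0 := by
      split <;> simp [hf]
    have hb : (0:ℝ) ≤ if m ≤ (cb:ℝ) then binomPMF n ca pa * binomPMF n cb pb else 0 := by
      split <;> simp [hf]
    linarith

lemma tendsto_lt_add_eq_zero (h0b : 0 ≤ pb) (hba : pb < pa) (h1a : pa ≤ 1) :
    Tendsto (fun n => ltKernel n (pa, pb) + eqKernel n (pa, pb)) atTop (𝓝 0) := by
  have h0a : 0 ≤ pa := le_trans h0b hba.le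
  have h1b : pb ≤ 1 := le_trans hba.le h1a
  set ε : ℝ := (pa - pb) / 2 with hε
  have hεpos : 0 < ε := by simp [hε]; linarith
  set m : ℝ := (pa + pb) / 2 with hm
  have hbound : ∀ n : ℕ, 1 ≤ n → ltKernel n (pa, pb) + eqKernel n (pa, pb)
      ≤ 1 / (2 * ε^2) * (1 / n) := by
    intro n hn
    have hnpos : (0:ℝ) < n := by exact_mod_cast hn
    have htpos : 0 < (n:ℝ) * ε := by positivity
    have hta : ∑ c ∈ (range (n+1)).filter (fun c : ℕ => (c:ℝ) ≤ (n:ℝ)*m), binomPMF n c pa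
        ≤ n * pa * (1 - pa) / ((n:ℝ)*ε)^2 := by
      apply binom_tail h0a h1a htpos n _ (Finset.filter_subset _ _)
      intro c hc
      rw [Finset.mem_filter] at hc
      have : (c:ℝ) ≤ (n:ℝ)*m := hc.2
      rw [abs_sub_comm, abs_of_nonneg (by nlinarith)]
      nlinarith
    have htb : ∑ c ∈ (range (n+1)).filter (fun c : ℕ => (n:ℝ)*m ≤ (c:ℝ)), binomPMF n c pb
        ≤ n * pb * (1 - pb) / ((n:ℝ)*ε)^2 := by
      apply binom_tail h0b h1b htpos n _ (Finset.filter_subset _ _)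
      intro c hc
      rw [Finset.mem_filter] at hc
      have : (n:ℝ)*m ≤ (c:ℝ) := hc.2
      rw [abs_of_nonneg (by nlinarith)]
      nlinarith
    have hsplit := lt_add_eq_le_split h0a h1a h0b h1b n ((n:ℝ)*m)
    have hpa4 : pa * (1 - pa) ≤ 1/4 := by nlinarith [sq_nonneg (pa - 1/2)]
    have hpb4 : pb * (1 - pb) ≤ 1/4 := by nlinarith [sq_nonneg (pb - 1/2)]
    have e1 : n * pa * (1 - pa) / ((n:ℝ)*ε)^2 ≤ 1 / (4 * ε^2) * (1/n) := by
      rw [div_le_iff₀ (by positivity)]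
      have : ((n:ℝ)*ε)^2 = n^2 * ε^2 := by ring
      rw [this]
      have : (1:ℝ) / (4 * ε^2) * (1/n) * (n^2 * ε^2) = n / 4 := by
        field_simp
      rw [this]
      nlinarith
    have e2 : n * pb * (1 - pb) / ((n:ℝ)*ε)^2 ≤ 1 / (4 * ε^2) * (1/n) := by
      rw [div_le_iff₀ (by positivity)]
      have : ((n:ℝ)*ε)^2 = n^2 * ε^2 := by ring
      rw [this]
      have : (1:ℝ) / (4 * ε^2) * (1/n) * (n^2 * ε^2) = n / 4 := by
        field_simp
      rw [this]
      nlinarith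
    have : 1 / (2 * ε^2) * (1/(n:ℝ)) = 1 / (4 * ε^2) * (1/n) + 1 / (4 * ε^2) * (1/n) := by
      field_simp
      ring
    rw [this]
    linarith
  have hzero : Tendsto (fun n : ℕ => 1 / (2 * ε^2) * (1 / (n:ℝ))) atTop (𝓝 0) := by
    rw [show (0:ℝ) = 1 / (2 * ε^2) * 0 by ring]
    exact (tendsto_one_div_atTop_nhds_zero_nat).const_mul _
  apply tendsto_of_tendsto_of_tendsto_of_le_of_le' tendsto_const_nhds hzero
  · filter_upwards with n
    exact add_nonneg (ltKernel_nonneg h0a h1a h0b h1b n) (eqKernel_nonneg h0a h1a h0b h1b n)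
  · filter_upwards [eventually_ge_atTop 1] with n hn
    exact hbound n hn
end


-- integral of cos(a t) over [-π, π]
lemma integral_cos_mul_eq (a : ℝ) (ha : a ≠ 0) :
    ∫ t in (-π)..π, Real.cos (a * t) = 2 * Real.sin (a * π) / a := by
  have := intervalIntegral.integral_comp_mul_left (a := -π) (b := π) (fun x => Real.cos x) ha
  rw [this, integral_cos]
  rw [mul_neg, Real.sin_neg]
  simp only [smul_eq_mul]
  field_simp
  ring

lemma integral_cos_diff (c c' : ℕ) :
    ∫ t in (-π)..π, Real.cos (((c:ℝ) - (c':ℝ)) * t)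
      = if c = c' then 2 * π else 0 := by
  by_cases h : c = c'
  · subst h
    simp [intervalIntegral.integral_const]
    ring
  · rw [if_neg h]
    have ha : ((c:ℝ) - (c':ℝ)) ≠ 0 := by
      intro hh
      apply h
      have : (c:ℝ) = (c':ℝ) := by linarith
      exact_mod_cast this
    rw [integral_cos_mul_eq _ ha]
    have : ((c:ℝ) - (c':ℝ)) * π = ((c:ℤ) - (c':ℤ) : ℤ) * π := by push_cast; ring
    rw [this, Real.sin_int_mul_pi]
    simp

noncomputable def hfun (p t : ℝ) : ℝ := 1 - 2 * p * (1 - p) * (1 - Real.cos t)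

lemma normSq_eq (p : ℝ) (n : ℕ) (t : ℝ) :
    ∑ c ∈ range (n+1), ∑ c' ∈ range (n+1),
      binomPMF n c p * binomPMF n c' p * Real.cos (((c:ℝ) - (c':ℝ)) * t)
    = hfun p t ^ n := by
  set w : ℂ := ∑ c ∈ range (n+1), (binomPMF n c p : ℂ) * Complex.exp ((c:ℝ) * t * Complex.I)
    with hw
  have hwre : w.re = ∑ c ∈ range (n+1), binomPMF n c p * Real.cos ((c:ℝ) * t) := by
    rw [hw, Complex.re_sum]
    apply Finset.sum_congr rfl
    intro c _
    rw [show ((c:ℝ) * t : ℂ) * Complex.I = ((((c:ℝ) * t : ℝ)) : ℂ) * Complex.I by push_cast; ring]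
    rw [Complex.exp_mul_I]
    simp [← Complex.ofReal_mul, Complex.cos_ofReal_re, Complex.sin_ofReal_im,
      Complex.cos_ofReal_im, Complex.sin_ofReal_re]
  have hwim : w.im = ∑ c ∈ range (n+1), binomPMF n c p * Real.sin ((c:ℝ) * t) := by
    rw [hw, Complex.im_sum]
    apply Finset.sum_congr rfl
    intro c _
    rw [show ((c:ℝ) * t : ℂ) * Complex.I = ((((c:ℝ) * t : ℝ)) : ℂ) * Complex.I by push_cast; ring]
    rw [Complex.exp_mul_I]
    simp [← Complex.ofReal_mul, Complex.cos_ofReal_re, Complex.sin_ofReal_im,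
      Complex.cos_ofReal_im, Complex.sin_ofReal_re]
  have hLHS : ∑ c ∈ range (n+1), ∑ c' ∈ range (n+1),
      binomPMF n c p * binomPMF n c' p * Real.cos (((c:ℝ) - (c':ℝ)) * t)
      = Complex.normSq w := by
    rw [Complex.normSq_apply, hwre, hwim, Finset.sum_mul_sum, Finset.sum_mul_sum,
      ← Finset.sum_add_distrib]
    apply Finset.sum_congr rfl
    intro c _
    rw [← Finset.sum_add_distrib]
    apply Finset.sum_congr rfl
    intro c' _
    have : ((c:ℝ) - (c':ℝ)) * t = (c:ℝ)*t - (c':ℝ)*t := by ring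
    rw [this, Real.cos_sub]
    ring
  have hwpow : w = ((p:ℝ) * Complex.exp ((t:ℝ) * Complex.I) + ((1 - p : ℝ) : ℂ)) ^ n := by
    rw [add_pow]
    rw [hw]
    apply Finset.sum_congr rfl
    intro c hc
    rw [mul_pow, ← Complex.exp_nat_mul]
    unfold binomPMF
    push_cast
    ring_nf
  have hnormSq_base : Complex.normSq ((p:ℝ) * Complex.exp ((t:ℝ) * Complex.I) + ((1 - p : ℝ) : ℂ))
      = hfun p t := by
    rw [Complex.exp_mul_I]
    have : (p:ℂ) * (Complex.cos (t:ℂ) + Complex.sin (t:ℂ) * Complex.I) + ((1 - p : ℝ) : ℂ)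
        = ((1 - p + p * Real.cos t : ℝ) : ℂ) + ((p * Real.sin t : ℝ) : ℂ) * Complex.I := by
      rw [← Complex.ofReal_cos, ← Complex.ofReal_sin]
      push_cast
      ring
    rw [this, Complex.normSq_add_mul_I]
    have hsc := Real.sin_sq_add_cos_sq t
    unfold hfun
    linear_combination p^2 * hsc
  rw [hLHS, hwpow, map_pow, hnormSq_base]

lemma hfun_mem {p : ℝ} (h0 : 0 ≤ p) (h1 : p ≤ 1) (t : ℝ) :
    0 ≤ hfun p t ∧ hfun p t ≤ 1 := by
  have hc1 : Real.cos t ≤ 1 := Real.cos_le_one t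
  have hc2 : -1 ≤ Real.cos t := Real.neg_one_le_cos t
  have hpq : 0 ≤ p * (1-p) := mul_nonneg h0 (by linarith)
  constructor
  · have hle : 2*p*(1-p)*(1 - Real.cos t) ≤ 4*(p*(1-p)) := by nlinarith
    unfold hfun
    nlinarith [sq_nonneg (1 - 2*p)]
  · have hge : 0 ≤ 2*p*(1-p)*(1 - Real.cos t) := by
      have h3 : 0 ≤ 1 - Real.cos t := by linarith
      exact mul_nonneg (mul_nonneg (by linarith) (by linarith)) h3
    unfold hfun
    linarith

set_option maxHeartbeats 1000000 in
lemma eqKernel_diag_integral (p : ℝ) (n : ℕ) :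
    eqKernel n (p, p) = (2*π)⁻¹ * ∫ t in (-π)..π, hfun p t ^ n := by
  have hint : ∀ (c c' : ℕ), IntervalIntegrable
      (fun t => binomPMF n c p * binomPMF n c' p * Real.cos (((c:ℝ) - (c':ℝ)) * t))
      volume (-π) π := by
    intro c c'
    apply Continuous.intervalIntegrable
    fun_prop
  have hcongr : ∫ t in (-π)..π, hfun p t ^ n
      = ∫ t in (-π)..π, (∑ c ∈ range (n+1), ∑ c' ∈ range (n+1),
          binomPMF n c p * binomPMF n c' p * Real.cos (((c:ℝ) - (c':ℝ)) * t)) := by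
    apply intervalIntegral.integral_congr
    intro t _
    exact (normSq_eq p n t).symm
  have hsum : ∀ c : ℕ, IntervalIntegrable (fun t => ∑ c' ∈ range (n+1),
      binomPMF n c p * binomPMF n c' p * Real.cos (((c:ℝ) - (c':ℝ)) * t)) volume (-π) π :=
    fun c => Continuous.intervalIntegrable
      (continuous_finset_sum _ (fun c' _ => by fun_prop)) _ _
  have key : ∫ t in (-π)..π, hfun p t ^ n
      = ∑ c ∈ range (n+1), ∑ c' ∈ range (n+1),
          binomPMF n c p * binomPMF n c' p * (if c = c' then 2*π else 0) := by
    rw [hcongr]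
    calc ∫ t in (-π)..π, (∑ c ∈ range (n+1), ∑ c' ∈ range (n+1),
          binomPMF n c p * binomPMF n c' p * Real.cos (((c:ℝ) - (c':ℝ)) * t))
        = ∑ c ∈ range (n+1), ∫ t in (-π)..π, (∑ c' ∈ range (n+1),
            binomPMF n c p * binomPMF n c' p * Real.cos (((c:ℝ) - (c':ℝ)) * t)) :=
          intervalIntegral.integral_finset_sum (fun c _ => hsum c)
      _ = ∑ c ∈ range (n+1), ∑ c' ∈ range (n+1), ∫ t in (-π)..π,
            binomPMF n c p * binomPMF n c' p * Real.cos (((c:ℝ) - (c':ℝ)) * t) :=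
          Finset.sum_congr rfl (fun c _ =>
            intervalIntegral.integral_finset_sum (fun c' _ => hint c c'))
      _ = ∑ c ∈ range (n+1), ∑ c' ∈ range (n+1),
            binomPMF n c p * binomPMF n c' p * (if c = c' then 2*π else 0) :=
          Finset.sum_congr rfl (fun c _ => Finset.sum_congr rfl (fun c' _ => by
            rw [intervalIntegral.integral_const_mul, integral_cos_diff]))
  rw [key]
  have : ∑ c ∈ range (n+1), ∑ c' ∈ range (n+1),
      binomPMF n c p * binomPMF n c' p * (if c = c' then 2*π else 0)
      = (2*π) * eqKernel n (p,p) := by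
    unfold eqKernel
    rw [Finset.mul_sum]
    apply Finset.sum_congr rfl
    intro c hc
    have h2 : ∀ c' ∈ range (n+1),
        binomPMF n c p * binomPMF n c' p * (if c = c' then 2*π else 0)
        = if c' = c then binomPMF n c p * binomPMF n c p * (2*π) else 0 := by
      intro c' _
      by_cases h : c = c'
      · subst h; simp
      · simp [h, Ne.symm h]
    rw [Finset.sum_congr rfl h2, Finset.sum_ite_eq' (range (n+1)) c]
    simp only [hc, if_pos]
    ring
  rw [this]
  have hπ : (2*π) ≠ 0 := by positivity
  field_simp

set_option maxHeartbeats 1000000 in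
lemma eqKernel_diag_tendsto {p : ℝ} (hp0 : 0 < p) (hp1 : p < 1) :
    Filter.Tendsto (fun n => eqKernel n (p, p)) atTop (𝓝 0) := by
  have hfc : Continuous (fun t => hfun p t) := by
    unfold hfun; fun_prop
  have key : Filter.Tendsto (fun n => ∫ t in Set.Ioc (-π) π, hfun p t ^ n) atTop (𝓝 0) := by
    have h0 : (0:ℝ) = ∫ t in Set.Ioc (-π) π, (0:ℝ) := by simp
    rw [h0]
    apply MeasureTheory.tendsto_integral_of_dominated_convergence
      (bound := fun _ => (1:ℝ))
    · intro n
      exact ((hfc.pow n).aestronglyMeasurable)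
    · exact (MeasureTheory.integrableOn_const measure_Ioc_lt_top.ne)
    · intro n
      apply MeasureTheory.ae_restrict_of_ae
      filter_upwards with t
      obtain ⟨hh0, hh1⟩ := hfun_mem hp0.le hp1.le t
      rw [Real.norm_eq_abs, abs_of_nonneg (pow_nonneg hh0 n)]
      exact pow_le_one₀ hh0 hh1
    · have hane : ∀ᵐ (t:ℝ) ∂(volume.restrict (Set.Ioc (-π) π)), t ≠ 0 := by
        apply MeasureTheory.ae_restrict_of_ae
        rw [MeasureTheory.ae_iff]
        have he : {t : ℝ | ¬ t ≠ 0} = {0} := by ext t; simp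
        rw [he]
        simp
      filter_upwards [hane, MeasureTheory.ae_restrict_mem measurableSet_Ioc] with t ht0 htm
      obtain ⟨hh0, _⟩ := hfun_mem hp0.le hp1.le t
      have hc1 : Real.cos t ≤ 1 := Real.cos_le_one t
      have hclt : Real.cos t < 1 := by
        rcases lt_or_eq_of_le hc1 with h | h
        · exact h
        · exfalso
          have hpi := Real.pi_pos
          exact ht0 ((Real.cos_eq_one_iff_of_lt_of_lt
            (x := t) (by cases htm with | intro h1 h2 => linarith)
            (by cases htm with | intro h1 h2 => linarith)).mp h)
      have hh1 : hfun p t < 1 := by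
        have : 0 < 2*p*(1-p)*(1 - Real.cos t) := by
          have h1c : 0 < 1 - Real.cos t := by linarith
          have : 0 < p * (1-p) := mul_pos hp0 (by linarith)
          nlinarith
        unfold hfun
        linarith
      exact tendsto_pow_atTop_nhds_zero_of_lt_one hh0 hh1
  have heq : (fun n => eqKernel n (p, p))
      = fun n => (2*π)⁻¹ * ∫ t in Set.Ioc (-π) π, hfun p t ^ n := by
    funext n
    rw [eqKernel_diag_integral p n,
      intervalIntegral.integral_of_le (by linarith [Real.pi_pos])]
  rw [heq]
  rw [show (0:ℝ) = (2*π)⁻¹ * 0 by ring]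
  exact key.const_mul _


lemma gtKernel_nonneg {pa pb : ℝ} (h0a : 0 ≤ pa) (h1a : pa ≤ 1) (h0b : 0 ≤ pb) (h1b : pb ≤ 1)
    (n : ℕ) : 0 ≤ gtKernel n (pa, pb) := by
  rw [gtKernel_eq]
  apply Finset.sum_nonneg; intro cb _
  apply Finset.sum_nonneg; intro ca _
  have := mul_nonneg (binomPMF_nonneg h0a h1a n ca) (binomPMF_nonneg h0b h1b n cb)
  positivity

lemma gtKernel_le_one {pa pb : ℝ} (h0a : 0 ≤ pa) (h1a : pa ≤ 1) (h0b : 0 ≤ pb) (h1b : pb ≤ 1)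
    (n : ℕ) : gtKernel n (pa, pb) ≤ 1 := by
  have h := kernel_trichotomy n (pa, pb)
  have h1 := ltKernel_nonneg h0a h1a h0b h1b n
  have h2 := eqKernel_nonneg h0a h1a h0b h1b n
  linarith

lemma ltKernel_le_one {pa pb : ℝ} (h0a : 0 ≤ pa) (h1a : pa ≤ 1) (h0b : 0 ≤ pb) (h1b : pb ≤ 1)
    (n : ℕ) : ltKernel n (pa, pb) ≤ 1 := by
  have h := kernel_trichotomy n (pa, pb)
  have h1 := gtKernel_nonneg h0a h1a h0b h1b n
  have h2 := eqKernel_nonneg h0a h1a h0b h1b n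
  linarith

noncomputable def glim (a b : ℝ) : ℝ := if b < a then 1 else if a = b then 1/2 else 0

lemma kernels_tendsto {pa pb : ℝ} (h0a : 0 ≤ pa) (h1a : pa ≤ 1) (h0b : 0 ≤ pb) (h1b : pb ≤ 1)
    (hne : ¬(pa = pb ∧ (pa = 0 ∨ pa = 1))) :
    Tendsto (fun n => gtKernel n (pa, pb)) atTop (𝓝 (glim pa pb)) ∧
    Tendsto (fun n => ltKernel n (pa, pb)) atTop (𝓝 (glim pb pa)) := by
  rcases lt_trichotomy pb pa with hlt | heq | hgt
  · -- pb < pa : gt → 1, lt → 0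
    have hzero := tendsto_lt_add_eq_zero h0b hlt h1a
    have hgt1 : Tendsto (fun n => gtKernel n (pa, pb)) atTop (𝓝 1) := by
      have hfe : (fun n => gtKernel n (pa, pb))
          = fun n => 1 - (ltKernel n (pa, pb) + eqKernel n (pa, pb)) := by
        funext n
        have := kernel_trichotomy n (pa, pb)
        linarith
      rw [hfe]
      simpa using (tendsto_const_nhds (x := (1:ℝ))).sub hzero
    have hlt0 : Tendsto (fun n => ltKernel n (pa, pb)) atTop (𝓝 0) := by
      apply tendsto_of_tendsto_of_tendsto_of_le_of_le' tendsto_const_nhds hzero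
      · filter_upwards with n
        exact ltKernel_nonneg h0a h1a h0b h1b n
      · filter_upwards with n
        have := eqKernel_nonneg h0a h1a h0b h1b n
        linarith
    constructor
    · convert hgt1 using 2
      unfold glim
      rw [if_pos hlt]
    · convert hlt0 using 2
      unfold glim
      rw [if_neg (by linarith), if_neg (by linarith)]
  · -- pa = pb = p ∈ (0,1)
    subst heq
    have hp0 : 0 < pb := by
      rcases lt_or_eq_of_le h0b with h | h
      · exact h
      · exact absurd ⟨rfl, Or.inl h.symm⟩ hne
    have hp1 : pb < 1 := by
      rcases lt_or_eq_of_le h1b with h | h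
      · exact h
      · exact absurd ⟨rfl, Or.inr h⟩ hne
    have heqt := eqKernel_diag_tendsto hp0 hp1
    have hswap : ∀ n, ltKernel n (pb, pb) = gtKernel n (pb, pb) := fun n => ltKernel_swap n pb pb
    have hfe : (fun n => gtKernel n (pb, pb)) = fun n => (1 - eqKernel n (pb, pb)) / 2 := by
      funext n
      have h := kernel_trichotomy n (pb, pb)
      have h2 := hswap n
      linarith
    have hgt : Tendsto (fun n => gtKernel n (pb, pb)) atTop (𝓝 (1/2)) := by
      rw [hfe]
      have := ((tendsto_const_nhds (x := (1:ℝ))).sub heqt).div_const 2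
      simpa using this
    have hglim : glim pb pb = 1/2 := by
      unfold glim
      rw [if_neg (lt_irrefl pb), if_pos rfl]
    refine ⟨by rwa [hglim], ?_⟩
    rw [hglim]
    have : (fun n => ltKernel n (pb, pb)) = fun n => gtKernel n (pb, pb) := funext hswap
    rwa [this]
  · -- pa < pb : gt → 0, lt → 1
    have hswap1 : (fun n => gtKernel n (pa, pb)) = fun n => ltKernel n (pb, pa) := by
      funext n; rw [ltKernel_swap n pb pa]
    have hswap2 : (fun n => ltKernel n (pa, pb)) = fun n => gtKernel n (pb, pa) := by
      funext n; rw [ltKernel_swap n pa pb]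
    have hzero := tendsto_lt_add_eq_zero h0a hgt h1b
    have hgt1 : Tendsto (fun n => gtKernel n (pb, pa)) atTop (𝓝 1) := by
      have hfe : (fun n => gtKernel n (pb, pa))
          = fun n => 1 - (ltKernel n (pb, pa) + eqKernel n (pb, pa)) := by
        funext n
        have := kernel_trichotomy n (pb, pa)
        linarith
      rw [hfe]
      simpa using (tendsto_const_nhds (x := (1:ℝ))).sub hzero
    have hlt0 : Tendsto (fun n => ltKernel n (pb, pa)) atTop (𝓝 0) := by
      apply tendsto_of_tendsto_of_tendsto_of_le_of_le' tendsto_const_nhds hzero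
      · filter_upwards with n
        exact ltKernel_nonneg h0b h1b h0a h1a n
      · filter_upwards with n
        have := eqKernel_nonneg h0b h1b h0a h1a n
        linarith
    constructor
    · rw [hswap1]
      convert hlt0 using 2
      unfold glim
      rw [if_neg (by linarith), if_neg (by linarith)]
    · rw [hswap2]
      convert hgt1 using 2
      unfold glim
      rw [if_pos hgt]


lemma ind_eq_one {a b : ℝ} (h : a = b) :
    {p : ℝ × ℝ | p.1 = p.2}.indicator (fun _ => (1:ℝ)) (a, b) = 1 := by
  have hm : (a, b) ∈ {p : ℝ × ℝ | p.1 = p.2} := h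
  rw [Set.indicator_of_mem hm]
lemma ind_eq_zero {a b : ℝ} (h : ¬ a = b) :
    {p : ℝ × ℝ | p.1 = p.2}.indicator (fun _ => (1:ℝ)) (a, b) = 0 := by
  have hm : (a, b) ∉ {p : ℝ × ℝ | p.1 = p.2} := h
  rw [Set.indicator_of_notMem hm]
lemma ind_gt_one {a b : ℝ} (h : b < a) :
    {p : ℝ × ℝ | p.1 > p.2}.indicator (fun _ => (1:ℝ)) (a, b) = 1 := by
  have hm : (a, b) ∈ {p : ℝ × ℝ | p.1 > p.2} := h
  rw [Set.indicator_of_mem hm]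
lemma ind_gt_zero {a b : ℝ} (h : ¬ b < a) :
    {p : ℝ × ℝ | p.1 > p.2}.indicator (fun _ => (1:ℝ)) (a, b) = 0 := by
  have hm : (a, b) ∉ {p : ℝ × ℝ | p.1 > p.2} := h
  rw [Set.indicator_of_notMem hm]
lemma ind_lt_one {a b : ℝ} (h : a < b) :
    {p : ℝ × ℝ | p.1 < p.2}.indicator (fun _ => (1:ℝ)) (a, b) = 1 := by
  have hm : (a, b) ∈ {p : ℝ × ℝ | p.1 < p.2} := h
  rw [Set.indicator_of_mem hm]
lemma ind_lt_zero {a b : ℝ} (h : ¬ a < b) :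
    {p : ℝ × ℝ | p.1 < p.2}.indicator (fun _ => (1:ℝ)) (a, b) = 0 := by
  have hm : (a, b) ∉ {p : ℝ × ℝ | p.1 < p.2} := h
  rw [Set.indicator_of_notMem hm]

/-- Dominated-convergence step in the proof of Proposition 1(c): as `L' → ∞`,
`N(G; z, L')` and `D(G; z, L')` converge to the integrals of
`(1/2)·1{p_a = p_b} + 1{p_a > p_b}` (resp. `…+ 1{p_a < p_b}`) against `p(z|θ) dG(θ)`,
provided `G` puts no mass on the corner points `(0,0)` and `(1,1)`. -/
theorem ND_limit_infinite_applications
    (L : ℕ) (hL : 1 ≤ L) (z : ℕ × ℕ) (hz : z.1 ≤ L ∧ z.2 ≤ L)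
    (G : Measure (unitInterval × unitInterval)) [IsProbabilityMeasure G]
    (hcorner : G ({((0 : unitInterval), (0 : unitInterval)),
        ((1 : unitInterval), (1 : unitInterval))} : Set (unitInterval × unitInterval)) = 0) :
    Tendsto (fun L' => Nval G L z L') atTop
      (𝓝 (∫ θ : unitInterval × unitInterval,
        ((1 / 2) * ({p : ℝ × ℝ | p.1 = p.2}.indicator (fun _ => (1 : ℝ))
            ((θ.1 : ℝ), (θ.2 : ℝ))) +
          {p : ℝ × ℝ | p.1 > p.2}.indicator (fun _ => (1 : ℝ)) ((θ.1 : ℝ), (θ.2 : ℝ))) *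
          biLik L z ((θ.1 : ℝ), (θ.2 : ℝ)) ∂G)) ∧
    Tendsto (fun L' => Dval G L z L') atTop
      (𝓝 (∫ θ : unitInterval × unitInterval,
        ((1 / 2) * ({p : ℝ × ℝ | p.1 = p.2}.indicator (fun _ => (1 : ℝ))
            ((θ.1 : ℝ), (θ.2 : ℝ))) +
          {p : ℝ × ℝ | p.1 < p.2}.indicator (fun _ => (1 : ℝ)) ((θ.1 : ℝ), (θ.2 : ℝ))) *
          biLik L z ((θ.1 : ℝ), (θ.2 : ℝ)) ∂G)) := by
  -- basic coordinate facts
  have hco : ∀ θ : unitInterval × unitInterval,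
      0 ≤ (θ.1 : ℝ) ∧ (θ.1 : ℝ) ≤ 1 ∧ 0 ≤ (θ.2 : ℝ) ∧ (θ.2 : ℝ) ≤ 1 :=
    fun θ => ⟨θ.1.2.1, θ.1.2.2, θ.2.2.1, θ.2.2.2⟩
  have hbiLik : ∀ θ : unitInterval × unitInterval,
      0 ≤ biLik L z ((θ.1 : ℝ), (θ.2 : ℝ)) ∧ biLik L z ((θ.1 : ℝ), (θ.2 : ℝ)) ≤ 1 := by
    intro θ
    obtain ⟨h1, h2, h3, h4⟩ := hco θ
    constructor
    · exact mul_nonneg (binomPMF_nonneg h1 h2 L z.1) (binomPMF_nonneg h3 h4 L z.2)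
    · exact mul_le_one₀ (binomPMF_le_one h1 h2 hz.1) (binomPMF_nonneg h3 h4 L z.2)
        (binomPMF_le_one h3 h4 hz.2)
  -- a.e. avoidance of the corners
  have hae : ∀ᵐ θ ∂G, θ ∉ ({((0 : unitInterval), (0 : unitInterval)),
      ((1 : unitInterval), (1 : unitInterval))} : Set (unitInterval × unitInterval)) := by
    rw [MeasureTheory.ae_iff]
    have hset : {θ : unitInterval × unitInterval | ¬ θ ∉ ({((0 : unitInterval), (0 : unitInterval)),
        ((1 : unitInterval), (1 : unitInterval))} : Set (unitInterval × unitInterval))}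
        = ({((0 : unitInterval), (0 : unitInterval)),
        ((1 : unitInterval), (1 : unitInterval))} : Set (unitInterval × unitInterval)) := by
      ext θ
      simp [not_not]
      tauto
    rw [hset]
    exact hcorner
  -- continuity
  have hcont_bi : Continuous fun θ : unitInterval × unitInterval =>
      biLik L z ((θ.1 : ℝ), (θ.2 : ℝ)) := by
    unfold biLik binomPMF
    fun_prop
  have hcont_gt : ∀ n, Continuous fun θ : unitInterval × unitInterval =>
      gtKernel n ((θ.1 : ℝ), (θ.2 : ℝ)) := by
    intro n
    unfold gtKernel
    apply continuous_finset_sum; intro cb _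
    apply continuous_finset_sum; intro ca _
    unfold binomPMF
    fun_prop
  have hcont_lt : ∀ n, Continuous fun θ : unitInterval × unitInterval =>
      ltKernel n ((θ.1 : ℝ), (θ.2 : ℝ)) := by
    intro n
    unfold ltKernel
    apply continuous_finset_sum; intro cb _
    apply continuous_finset_sum; intro ca _
    unfold binomPMF
    fun_prop
  -- glim matches indicator expressions
  have hglim_gt : ∀ θ : unitInterval × unitInterval,
      θ ∉ ({((0 : unitInterval), (0 : unitInterval)),
        ((1 : unitInterval), (1 : unitInterval))} : Set (unitInterval × unitInterval)) →
      glim (θ.1 : ℝ) (θ.2 : ℝ)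
        = (1 / 2) * ({p : ℝ × ℝ | p.1 = p.2}.indicator (fun _ => (1 : ℝ))
            ((θ.1 : ℝ), (θ.2 : ℝ)))
          + {p : ℝ × ℝ | p.1 > p.2}.indicator (fun _ => (1 : ℝ)) ((θ.1 : ℝ), (θ.2 : ℝ)) := by
    intro θ _
    unfold glim
    rcases lt_trichotomy (θ.2 : ℝ) (θ.1 : ℝ) with h | h | h
    · rw [if_pos h, ind_eq_zero (by intro hh; linarith), ind_gt_one h]
      ring
    · rw [if_neg (by linarith), if_pos h.symm, ind_eq_one h.symm, ind_gt_zero (by linarith)]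
      ring
    · rw [if_neg (by linarith), if_neg (by intro hh; linarith),
        ind_eq_zero (by intro hh; linarith), ind_gt_zero (by linarith)]
      ring
  have hglim_lt : ∀ θ : unitInterval × unitInterval,
      θ ∉ ({((0 : unitInterval), (0 : unitInterval)),
        ((1 : unitInterval), (1 : unitInterval))} : Set (unitInterval × unitInterval)) →
      glim (θ.2 : ℝ) (θ.1 : ℝ)
        = (1 / 2) * ({p : ℝ × ℝ | p.1 = p.2}.indicator (fun _ => (1 : ℝ))
            ((θ.1 : ℝ), (θ.2 : ℝ)))
          + {p : ℝ × ℝ | p.1 < p.2}.indicator (fun _ => (1 : ℝ)) ((θ.1 : ℝ), (θ.2 : ℝ)) := by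
    intro θ _
    unfold glim
    rcases lt_trichotomy (θ.1 : ℝ) (θ.2 : ℝ) with h | h | h
    · rw [if_pos h, ind_eq_zero (by intro hh; linarith), ind_lt_one h]
      ring
    · rw [if_neg (by linarith), if_pos h.symm, ind_eq_one h, ind_lt_zero (by linarith)]
      ring
    · rw [if_neg (by linarith), if_neg (by intro hh; linarith),
        ind_eq_zero (by intro hh; linarith), ind_lt_zero (by linarith)]
      ring
  -- non-corner gives hne hypothesis
  have hne : ∀ θ : unitInterval × unitInterval,
      θ ∉ ({((0 : unitInterval), (0 : unitInterval)),
        ((1 : unitInterval), (1 : unitInterval))} : Set (unitInterval × unitInterval)) →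
      ¬((θ.1 : ℝ) = (θ.2 : ℝ) ∧ ((θ.1 : ℝ) = 0 ∨ (θ.1 : ℝ) = 1)) := by
    intro θ hθ ⟨hab, hor⟩
    apply hθ
    have h12 : θ.1 = θ.2 := Subtype.ext hab
    rcases hor with h | h
    · left
      have h1 : θ.1 = (0 : unitInterval) := Subtype.ext h
      have h2 : θ.2 = (0 : unitInterval) := by rw [← h12]; exact h1
      exact Prod.ext h1 h2
    · right
      have h1 : θ.1 = (1 : unitInterval) := Subtype.ext h
      have h2 : θ.2 = (1 : unitInterval) := by rw [← h12]; exact h1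
      exact Prod.ext h1 h2
  constructor
  · unfold Nval
    apply MeasureTheory.tendsto_integral_of_dominated_convergence (bound := fun _ => (1:ℝ))
    · intro n
      exact ((hcont_gt n).mul hcont_bi).aestronglyMeasurable
    · exact MeasureTheory.integrable_const 1
    · intro n
      filter_upwards with θ
      obtain ⟨h1, h2, h3, h4⟩ := hco θ
      obtain ⟨hb0, hb1⟩ := hbiLik θ
      have hg0 := gtKernel_nonneg h1 h2 h3 h4 n
      have hg1 := gtKernel_le_one h1 h2 h3 h4 n
      rw [Real.norm_eq_abs, abs_of_nonneg (mul_nonneg hg0 hb0)]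
      exact mul_le_one₀ hg1 hb0 hb1
    · filter_upwards [hae] with θ hθ
      obtain ⟨h1, h2, h3, h4⟩ := hco θ
      rw [← hglim_gt θ hθ]
      exact ((kernels_tendsto h1 h2 h3 h4 (hne θ hθ)).1).mul_const _
  · unfold Dval
    apply MeasureTheory.tendsto_integral_of_dominated_convergence (bound := fun _ => (1:ℝ))
    · intro n
      exact ((hcont_lt n).mul hcont_bi).aestronglyMeasurable
    · exact MeasureTheory.integrable_const 1
    · intro n
      filter_upwards with θ
      obtain ⟨h1, h2, h3, h4⟩ := hco θ
      obtain ⟨hb0, hb1⟩ := hbiLik θ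
      have hg0 := ltKernel_nonneg h1 h2 h3 h4 n
      have hg1 := ltKernel_le_one h1 h2 h3 h4 n
      rw [Real.norm_eq_abs, abs_of_nonneg (mul_nonneg hg0 hb0)]
      exact mul_le_one₀ hg1 hb0 hb1
    · filter_upwards [hae] with θ hθ
      obtain ⟨h1, h2, h3, h4⟩ := hco θ
      rw [← hglim_lt θ hθ]
      exact ((kernels_tendsto h1 h2 h3 h4 (hne θ hθ)).2).mul_const _
end
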